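/- arXiv:1807.06559 — 7 statements merged into one kernel-verified Lean document; each statement's English description precedes it below -/
import Mathlib

section
/- Let M→N be a matroid perspective on a finite linearly ordered ground set E, and let B ⊆ E. Let e ∈ E∖B and f ∈ B. Suppose C is a circuit of M with C∖{e} ⊆ B and e = min(C), and D is a cocircuit of N with D∖{f} ⊆ E∖B and f = min(D). Then C ∩ D = ∅. -/
/-- A circuit of a matroid: a minimal dependent set. -/
def Matroid.IsCircuit' {α : Type*} (M : Matroid α) (C : Set α) : Prop :=
  M.Dep C ∧ ∀ D, M.Dep D → D ⊆ C → D = C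

/-- A cocircuit of a matroid: a circuit of the dual matroid. -/
def Matroid.IsCocircuit' {α : Type*} (M : Matroid α) (C : Set α) : Prop :=
  M✶.IsCircuit' C

/-- The rank of a set in a matroid: the largest cardinality of an independent subset. -/
noncomputable def Matroid.rk' {α : Type*} (M : Matroid α) (A : Set α) : ℕ :=
  sSup {n : ℕ | ∃ I, I ⊆ A ∧ M.Indep I ∧ I.ncard = n}

/-- `e` is the minimum element of the set `C`. -/
def IsMinOf {α : Type*} [LinearOrder α] (C : Set α) (e : α) : Prop :=
  e ∈ C ∧ ∀ x ∈ C, e ≤ x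

/-- `Int_M(A)`: internally active elements of `A` w.r.t. `M`
(the ground set is the whole type, so `E ∖ A = Aᶜ`). -/
def IntSet {α : Type*} [LinearOrder α] (M : Matroid α) (A : Set α) : Set α :=
  {e | e ∈ A ∧ ∃ C, M.IsCocircuit' C ∧ C ⊆ Aᶜ ∪ {e} ∧ IsMinOf C e}

/-- `Ext_M(A)`: externally active elements w.r.t. `M`. -/
def ExtSet {α : Type*} [LinearOrder α] (M : Matroid α) (A : Set α) : Set α :=
  {e | e ∉ A ∧ ∃ C, M.IsCircuit' C ∧ C ⊆ A ∪ {e} ∧ IsMinOf C e}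

/-- `P_M(A)`: smallest elements of cocircuits of `M` contained in `E ∖ A`. -/
def PActSet {α : Type*} [LinearOrder α] (M : Matroid α) (A : Set α) : Set α :=
  {e | e ∉ A ∧ ∃ C, M.IsCocircuit' C ∧ C ⊆ Aᶜ ∧ IsMinOf C e}

/-- `Q_M(A)`: smallest elements of circuits of `M` contained in `A`. -/
def QActSet {α : Type*} [LinearOrder α] (M : Matroid α) (A : Set α) : Set α :=
  {e | e ∈ A ∧ ∃ C, M.IsCircuit' C ∧ C ⊆ A ∧ IsMinOf C e}


lemma flat_closure_aux {α : Type*} (M : Matroid α) (X : Set α) : M.IsFlat (M.closure X) := by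
  rw [Matroid.closure_def]
  have hne : Nonempty {F // M.IsFlat F ∧ X ∩ M.E ⊆ F} :=
    ⟨⟨M.E, M.ground_isFlat, Set.inter_subset_right⟩⟩
  have h := Matroid.IsFlat.iInter (M := M)
    (Fs := fun F : {F // M.IsFlat F ∧ X ∩ M.E ⊆ F} ↦ F.1) (fun F ↦ F.2.1)
  convert h using 1
  rw [Set.sInter_eq_iInter]
  exact Set.iInter_congr fun _ ↦ rfl

/-- For a matroid perspective `M → N`, if `C` is a circuit of `M` with `C ∖ {e} ⊆ B`
and `e = min C`, `e ∉ B`, and `D` is a cocircuit of `N` with `D ∖ {f} ⊆ E ∖ B` and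
`f = min D`, `f ∈ B`, then `C ∩ D = ∅`. -/
theorem stmt5 {α : Type*} [Fintype α] [LinearOrder α] (M N : Matroid α)
    (hME : M.E = Set.univ) (hNE : N.E = Set.univ)
    (hMN : ∀ F, N.IsFlat F → M.IsFlat F)
    (B : Set α) (e f : α) (he : e ∉ B) (hf : f ∈ B)
    (C : Set α) (hC : M.IsCircuit' C) (hCB : C \ {e} ⊆ B) (heC : IsMinOf C e)
    (D : Set α) (hD : N.IsCocircuit' D) (hDB : D \ {f} ⊆ Bᶜ) (hfD : IsMinOf D f) :
    C ∩ D = ∅ := by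
  by_contra hne
  obtain ⟨x, hxC, hxD⟩ := Set.nonempty_iff_ne_empty.2 hne
  -- every element of C ∩ D is e or f
  have hef : ∀ y, y ∈ C ∩ D → y = e ∨ y = f := by
    rintro y ⟨hyC, hyD⟩
    by_contra hcon
    push_neg at hcon
    have h1 : y ∈ B := hCB ⟨hyC, hcon.1⟩
    have h2 : y ∈ Bᶜ := hDB ⟨hyD, hcon.2⟩
    exact h2 h1
  have hnefboth : ¬ (e ∈ C ∩ D ∧ f ∈ C ∩ D) := by
    rintro ⟨⟨-, heD⟩, ⟨hfC, -⟩⟩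
    have h1 : e ≤ f := heC.2 f hfC
    have h2 : f ≤ e := hfD.2 e heD
    have : e = f := le_antisymm h1 h2
    exact he (this ▸ hf)
  have hCD : C ∩ D = {x} := by
    ext y
    constructor
    · intro hy
      rcases hef y hy with hy' | hy' <;> rcases hef x ⟨hxC, hxD⟩ with hx' | hx'
      · exact hy' ▸ hx' ▸ rfl
      · exact absurd ⟨hy' ▸ hy, hx' ▸ ⟨hxC, hxD⟩⟩ hnefboth
      · exact absurd ⟨hx' ▸ ⟨hxC, hxD⟩, hy' ▸ hy⟩ hnefboth
      · exact hy' ▸ hx' ▸ rfl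
    · rintro rfl; exact ⟨hxC, hxD⟩
  -- C \ {x} is independent in M
  have hInd : M.Indep (C \ {x}) := by
    by_contra hdep
    have hd : M.Dep (C \ {x}) := ⟨hdep, Set.diff_subset.trans hC.1.subset_ground⟩
    have := hC.2 _ hd Set.diff_subset
    have hx' : x ∈ C \ {x} := by rw [this]; exact hxC
    exact hx'.2 rfl
  have hxnotmem : x ∉ C \ {x} := fun h ↦ h.2 rfl
  have hxcl : x ∈ M.closure (C \ {x}) := by
    rw [hInd.mem_closure_iff_of_notMem hxnotmem]
    rw [Set.insert_diff_singleton, Set.insert_eq_of_mem hxC]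
    exact hC.1
  -- Dᶜ is a flat of N
  have hDground : D ⊆ N.E := hD.1.subset_ground
  have hDcsub : Dᶜ ⊆ N.E := by rw [hNE]; exact Set.subset_univ _
  have hDcompl : N.E \ D = Dᶜ := by rw [hNE]; ext y; simp
  have hnspan : ¬ N.Spanning Dᶜ := by
    intro hsp
    have : N.Coindep D := by
      rw [Matroid.coindep_iff_compl_spanning hDground, hDcompl]; exact hsp
    exact hD.1.1 this
  have hclD : N.closure Dᶜ = Dᶜ := by
    refine subset_antisymm ?_ (N.subset_closure _ hDcsub)
    intro y hy
    by_contra hyD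
    rw [Set.notMem_compl_iff] at hyD
    have hdep : N✶.Dep (D \ {y}) := by
      rw [Matroid.dep_iff]
      refine ⟨fun hind ↦ ?_, Set.diff_subset.trans hD.1.subset_ground⟩
      have hco : N.Coindep (D \ {y}) := hind
      have hsp := hco.compl_spanning
      have heq : N.E \ (D \ {y}) = insert y Dᶜ := by
        rw [hNE]; ext z; by_cases hz : z = y <;> simp [hz]
      rw [heq] at hsp
      have hcleq : N.closure (insert y Dᶜ) = N.closure Dᶜ :=
        Matroid.closure_insert_eq_of_mem_closure hy
      refine hnspan ?_
      rw [Matroid.spanning_iff_closure_eq hDcsub, ← hcleq, hsp.closure_eq]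
    have := hD.2 _ hdep Set.diff_subset
    have hy' : y ∈ D \ {y} := by rw [this]; exact hyD
    exact hy'.2 rfl
  have hNflat : N.IsFlat Dᶜ := by
    have := flat_closure_aux N Dᶜ
    rwa [hclD] at this
  have hMflat : M.IsFlat Dᶜ := hMN _ hNflat
  -- C \ {x} ⊆ Dᶜ
  have hsub : C \ {x} ⊆ Dᶜ := by
    rintro y ⟨hyC, hyx⟩
    intro hyD
    have : y ∈ ({x} : Set α) := hCD ▸ (⟨hyC, hyD⟩ : y ∈ C ∩ D)
    exact hyx this
  have hCxg : C \ {x} ⊆ M.E := Set.diff_subset.trans hC.1.subset_ground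
  have hxF : x ∈ Dᶜ := by
    rw [Matroid.mem_closure_iff_forall_mem_isFlat _ hCxg] at hxcl
    exact hxcl _ hMflat hsub
  exact hxF hxD
end

section
/- Let M→N be a matroid perspective on a finite linearly ordered ground set E. Let B ⊆ E be spanning in N and independent in M, let P ⊆ Int_N(B), let Q ⊆ Ext_M(B), and set A = (B∖P) ∪ Q. Then r_N(A) = r(N) − |P|. -/
open Set

section Aux

variable {α : Type*}

/-- Any proper subset of a circuit is independent. -/
lemma aux_indep_diff {M : Matroid α} {C : Set α} (hC : M.IsCircuit' C) {x : α} (hx : x ∈ C) :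
    M.Indep (C \ {x}) := by
  by_contra h
  have hdep : M.Dep (C \ {x}) := ⟨h, diff_subset.trans hC.1.2⟩
  have heq := hC.2 _ hdep diff_subset
  have hx' : x ∈ C \ {x} := by rw [heq]; exact hx
  simp at hx'

lemma aux_mem_closure {M : Matroid α} {C : Set α} (hC : M.IsCircuit' C) {x : α} (hx : x ∈ C) :
    x ∈ M.closure (C \ {x}) := by
  by_contra h
  have hind := aux_indep_diff hC hx
  have : M.Indep (insert x (C \ {x})) := by
    rw [hind.insert_indep_iff_of_notMem (by simp)]
    exact ⟨hC.1.2 hx, h⟩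
  rw [insert_diff_singleton, insert_eq_of_mem hx] at this
  exact hC.1.1 this

/-- The closure of any set is a flat. -/
lemma aux_closure_flat (M : Matroid α) (X : Set α) : M.IsFlat (M.closure X) := by
  rw [Matroid.closure_def, sInter_eq_iInter]
  have : Nonempty ↑{F : Set α | M.IsFlat F ∧ X ∩ M.E ⊆ F} :=
    ⟨⟨M.E, M.ground_isFlat, inter_subset_right⟩⟩
  exact Matroid.IsFlat.iInter fun F => F.2.1

/-- No element of a cocircuit lies in the closure of the complement of the cocircuit. -/
lemma aux_cocirc_not_mem {N : Matroid α} (hNE : N.E = Set.univ) {D : Set α}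
    (hD : N.IsCocircuit' D) {p : α} (hp : p ∈ D) : p ∉ N.closure Dᶜ := by
  intro h
  have hind : N✶.Indep (D \ {p}) := aux_indep_diff hD hp
  have hsp : N.Spanning (N.E \ (D \ {p})) := Matroid.Coindep.compl_spanning hind
  have heq : N.E \ (D \ {p}) = Dᶜ ∪ {p} := by
    rw [hNE]; ext x; by_cases hxp : x = p <;> simp [hxp, hp]
  rw [heq] at hsp
  have hsub : Dᶜ ∪ {p} ⊆ N.closure Dᶜ :=
    union_subset (N.subset_closure Dᶜ (by simp [hNE])) (by simpa)
  have hcl : N.closure Dᶜ = N.E := by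
    apply subset_antisymm (N.closure_subset_ground _)
    rw [← hsp.closure_eq]
    exact Matroid.closure_subset_closure_of_subset_closure hsub
  have hspc : N.Spanning Dᶜ := ⟨hcl, by simp [hNE]⟩
  have hco : N.Coindep (N.E \ Dᶜ) :=
    (Matroid.spanning_iff_compl_coindep (by simp [hNE])).mp hspc
  rw [hNE, ← compl_eq_univ_diff, compl_compl] at hco
  exact hD.1.1 hco

/-- Adding elements outside all relevant closures preserves independence. -/
lemma aux_indep_union {N : Matroid α} (hNE : N.E = Set.univ) {I : Set α} (hI : N.Indep I) :
    ∀ (P : Set α), P.Finite → Disjoint I P →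
      (∀ p ∈ P, p ∉ N.closure ((I ∪ P) \ {p})) → N.Indep (I ∪ P) := by
  intro P hPfin
  refine Set.Finite.induction_on
    (motive := fun P _ => Disjoint I P → (∀ p ∈ P, p ∉ N.closure ((I ∪ P) \ {p})) → N.Indep (I ∪ P))
    P hPfin (fun _ _ => by simpa using hI) ?_
  intro a s ha hs ih hdisj h
  · have hsub : ∀ p ∈ s, p ∉ N.closure ((I ∪ s) \ {p}) := by
      intro p hp hmem
      exact h p (Or.inr hp) ((N.closure_subset_closure
        (diff_subset_diff_left (union_subset_union_right _ (subset_insert a s)))) hmem)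
    have hIs := ih (hdisj.mono_right (subset_insert a s)) hsub
    have haI : a ∉ I ∪ s := by
      rintro (h1 | h1)
      · exact (Set.disjoint_left.mp hdisj h1) (mem_insert a s)
      · exact ha h1
    have hkey : (I ∪ insert a s) \ {a} = I ∪ s := by
      rw [union_insert, insert_diff_of_mem _ (mem_singleton a), diff_singleton_eq_self haI]
    have ha' : a ∉ N.closure (I ∪ s) := hkey ▸ h a (mem_insert a s)
    have := (hIs.insert_indep_iff_of_notMem haI).mpr ⟨by simp [hNE], ha'⟩
    rwa [union_insert]

lemma aux_rk'_eq [Fintype α] {N : Matroid α} (hNE : N.E = Set.univ) {J A : Set α}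
    (hJ : N.IsBasis J A) : N.rk' A = J.ncard := by
  have hbdd : BddAbove {n : ℕ | ∃ I, I ⊆ A ∧ N.Indep I ∧ I.ncard = n} := by
    refine ⟨Fintype.card α, ?_⟩
    rintro n ⟨I, -, -, rfl⟩
    have := Set.ncard_le_ncard (Set.subset_univ I) (Set.toFinite _)
    simpa [Set.ncard_univ] using this
  refine le_antisymm (csSup_le ⟨0, ∅, by simp⟩ ?_) (le_csSup hbdd ⟨J, hJ.subset, hJ.indep, rfl⟩)
  rintro n ⟨I, hIA, hIind, rfl⟩
  obtain ⟨J', hJ', hIJ'⟩ := hIind.subset_isBasis_of_subset hIA (by simp [hNE])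
  have h1 : I.ncard ≤ J'.ncard := Set.ncard_le_ncard hIJ' (Set.toFinite _)
  have h2 : J'.ncard = J.ncard := hJ'.restrict_isBase.ncard_eq_ncard_of_isBase hJ.restrict_isBase
  omega

end Aux

/-- For a matroid perspective `M → N`, `B` spanning in `N` and independent in `M`,
`P ⊆ Int_N(B)`, `Q ⊆ Ext_M(B)`, and `A = (B ∖ P) ∪ Q`, we have `r_N(A) = r(N) − |P|`. -/
theorem stmt7 {α : Type*} [Fintype α] [LinearOrder α] (M N : Matroid α)
    (hME : M.E = Set.univ) (hNE : N.E = Set.univ)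
    (hMN : ∀ F, N.IsFlat F → M.IsFlat F)
    (B : Set α) (hBs : N.Spanning B) (hBi : M.Indep B)
    (P : Set α) (hP : P ⊆ IntSet N B) (Q : Set α) (hQ : Q ⊆ ExtSet M B) :
    N.rk' ((B \ P) ∪ Q) = N.rk' Set.univ - P.ncard := by
  classical
  have hPB : P ⊆ B := fun p hp => (hP hp).1
  -- elements of P are not in the closure of any subset of B \ {p}
  have hPkey : ∀ p ∈ P, ∀ S : Set α, S ⊆ B \ {p} → p ∉ N.closure S := by
    intro p hp S hS hmem
    obtain ⟨-, D, hD, hDsub, hDmin⟩ := hP hp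
    have hSD : S ⊆ Dᶜ := by
      intro x hx hxD
      rcases hDsub hxD with h1 | h1
      · exact h1 (hS hx).1
      · exact (hS hx).2 h1
    exact aux_cocirc_not_mem hNE hD hDmin.1 ((N.closure_subset_closure hSD) hmem)
  -- Q lies in the N-closure of B \ P
  have hQc : ∀ q ∈ Q, q ∈ N.closure (B \ P) := by
    intro q hq
    obtain ⟨hqB, C, hC, hCsub, hCmin⟩ := hQ hq
    have hCq : C \ {q} ⊆ B \ P := by
      rintro x ⟨hxC, hxq⟩
      have hxB : x ∈ B := by
        rcases hCsub hxC with h | h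
        · exact h
        · exact absurd h hxq
      refine ⟨hxB, fun hxP => ?_⟩
      obtain ⟨-, D, hD, hDsub, hDmin⟩ := hP hxP
      have hqD : q ∉ D := by
        intro hqD
        have h1 : x ≤ q := hDmin.2 q hqD
        have h2 : q ≤ x := hCmin.2 x hxC
        exact hqB ((le_antisymm h2 h1) ▸ hxB)
      have hCD : C \ {x} ⊆ Dᶜ := by
        rintro y ⟨hyC, hyx⟩ hyD
        rcases hDsub hyD with h1 | h1
        · rcases hCsub hyC with h2 | h2
          · exact h1 h2
          · exact hqD (h2 ▸ hyD)
        · exact hyx h1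
      have hF : M.IsFlat (N.closure Dᶜ) := hMN _ (aux_closure_flat N Dᶜ)
      have hx1 : x ∈ M.closure (C \ {x}) := aux_mem_closure hC hxC
      have hsub2 : M.closure (C \ {x}) ⊆ N.closure Dᶜ := by
        have h3 : C \ {x} ⊆ N.closure Dᶜ :=
          fun y hy => (N.subset_closure Dᶜ (by simp [hNE])) (hCD hy)
        calc M.closure (C \ {x}) ⊆ M.closure (N.closure Dᶜ) := M.closure_subset_closure h3
          _ = N.closure Dᶜ := hF.closure
      exact aux_cocirc_not_mem hNE hD hDmin.1 (hsub2 hx1)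
    have hq1 : q ∈ M.closure (C \ {q}) := aux_mem_closure hC hCmin.1
    have hF : M.IsFlat (N.closure (B \ P)) := hMN _ (aux_closure_flat N _)
    have hsub3 : M.closure (C \ {q}) ⊆ N.closure (B \ P) := by
      refine (M.closure_subset_closure
        (hCq.trans (N.subset_closure _ (by simp [hNE])))).trans ?_
      rw [hF.closure]
    exact hsub3 hq1
  obtain ⟨I, hI⟩ := N.exists_isBasis (B \ P) (by simp [hNE])
  have hIB : I ⊆ B \ P := hI.subset
  -- I is a basis of (B \ P) ∪ Q
  have hIA : N.IsBasis I ((B \ P) ∪ Q) := by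
    refine hI.indep.isBasis_of_subset_of_subset_closure (hIB.trans subset_union_left) ?_
    rw [hI.closure_eq_closure]
    exact union_subset (N.subset_closure _ (by simp [hNE])) (fun q hq => hQc q hq)
  have hIP : Disjoint I P := disjoint_left.mpr fun x hxI hxP => (hIB hxI).2 hxP
  -- I ∪ P is independent
  have hIPindep : N.Indep (I ∪ P) := by
    refine aux_indep_union hNE hI.indep P (Set.toFinite P) hIP ?_
    intro p hp
    refine hPkey p hp _ (diff_subset_diff_left (union_subset ?_ hPB))
    exact hIB.trans diff_subset
  -- I ∪ P is spanning
  have hIPspan : N.Spanning (I ∪ P) := by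
    have h1 : N.closure (I ∪ P) = N.closure ((B \ P) ∪ P) := by
      rw [← Matroid.closure_union_closure_left_eq, hI.closure_eq_closure,
        Matroid.closure_union_closure_left_eq]
    have h2 : N.E ⊆ N.closure ((B \ P) ∪ P) := by
      rw [← hBs.closure_eq]
      exact N.closure_subset_closure (by rw [diff_union_self]; exact subset_union_left)
    exact ⟨by rw [h1]; exact subset_antisymm (N.closure_subset_ground _) h2, by simp [hNE]⟩
  have hbase : N.IsBase (I ∪ P) := hIPindep.isBase_of_spanning hIPspan
  have hBasisUniv : N.IsBasis (I ∪ P) Set.univ := by rw [← hNE]; exact hbase.isBasis_ground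
  rw [aux_rk'_eq hNE hIA, aux_rk'_eq hNE hBasisUniv,
    Set.ncard_union_eq hIP (Set.toFinite _) (Set.toFinite _)]
  omega
end

section
/- Let M→N be a matroid perspective on a finite linearly ordered ground set E. Let B ⊆ E be independent in M, let P ⊆ Int_N(B), and let Q ⊆ Ext_M(B). Then every element of Q lies in the closure of B∖P in M; consequently (B∖P) ∪ Q is contained in the closure of B∖P in M. -/

lemma flat_of_closure_eq' {α : Type*} {M : Matroid α} {F : Set α} (hF : F ⊆ M.E)
    (h : M.closure F = F) : M.IsFlat F :=
  ⟨fun _I _X hIF hIX => hIX.subset_closure.trans (by rw [hIF.closure_eq_closure, h]), hF⟩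

lemma circuit'_diff_indep {α : Type*} {M : Matroid α} {C : Set α} (hC : M.IsCircuit' C) {e : α}
    (he : e ∈ C) : M.Indep (C \ {e}) := by
  by_contra h
  have hdep : M.Dep (C \ {e}) := ⟨h, Set.diff_subset.trans hC.1.subset_ground⟩
  have := hC.2 _ hdep Set.diff_subset
  rw [← this] at he
  exact he.2 rfl

lemma circuit'_mem_closure {α : Type*} {M : Matroid α} {C : Set α} (hC : M.IsCircuit' C) {e : α}
    (he : e ∈ C) : e ∈ M.closure (C \ {e}) := by
  have hind := circuit'_diff_indep hC he
  have hins : insert e (C \ {e}) = C := by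
    rw [Set.insert_diff_singleton, Set.insert_eq_self.2 he]
  have hdep : M.Dep (insert e (C \ {e})) := by rw [hins]; exact hC.1
  exact ((hind.insert_dep_iff).1 hdep).1

lemma cocircuit'_compl_flat {α : Type*} {N : Matroid α} (hNE : N.E = Set.univ) {D : Set α}
    (hD : N.IsCocircuit' D) : N.IsFlat Dᶜ := by
  have hDE : D ⊆ N.E := hD.1.2
  refine flat_of_closure_eq' (by rw [hNE]; exact Set.subset_univ _) ?_
  refine Set.Subset.antisymm ?_ (N.subset_closure _ (by rw [hNE]; exact Set.subset_univ _))
  intro x hx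
  by_contra hxD
  have hxD : x ∈ D := by simpa using hxD
  have hind : N✶.Indep (D \ {x}) := circuit'_diff_indep hD hxD
  have hco : N.Coindep (D \ {x}) := hind
  have hcl1 : N.closure (N.E \ (D \ {x})) = N.E := hco.closure_compl
  have heq : N.E \ (D \ {x}) = insert x Dᶜ := by
    rw [hNE]
    ext y
    by_cases hy : y = x <;> simp [Set.mem_diff, hy]
  rw [heq] at hcl1
  have hcl2 : N.closure (insert x Dᶜ) = N.closure Dᶜ :=
    Matroid.closure_insert_eq_of_mem_closure hx
  have hDco : N.Coindep D := by
    rw [Matroid.coindep_iff_closure_compl_eq_ground hDE, hNE,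
      ← Set.compl_eq_univ_diff, ← hcl2, hcl1, hNE]
  exact hD.1.1 hDco

/-- For a matroid perspective `M → N`, `B` independent in `M`, `P ⊆ Int_N(B)`, and
`Q ⊆ Ext_M(B)`: every element of `Q` lies in the closure of `B ∖ P` in `M`, hence
`(B ∖ P) ∪ Q` is contained in that closure. -/
theorem stmt8 {α : Type*} [Fintype α] [LinearOrder α] (M N : Matroid α)
    (hME : M.E = Set.univ) (hNE : N.E = Set.univ)
    (hMN : ∀ F, N.IsFlat F → M.IsFlat F)
    (B : Set α) (hBi : M.Indep B)
    (P : Set α) (hP : P ⊆ IntSet N B) (Q : Set α) (hQ : Q ⊆ ExtSet M B) :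
    Q ⊆ M.closure (B \ P) ∧ (B \ P) ∪ Q ⊆ M.closure (B \ P) := by
  have hBP : B \ P ⊆ M.E := by rw [hME]; exact Set.subset_univ _
  suffices h1 : Q ⊆ M.closure (B \ P) by
    exact ⟨h1, Set.union_subset (M.subset_closure _ hBP) h1⟩
  intro q hq
  obtain ⟨hqB, C, hC, hCsub, hCmin⟩ := hQ hq
  have hCP : ∀ p ∈ P, p ∉ C := by
    intro p hpP hpC
    obtain ⟨hpB, D, hD, hDsub, hDmin⟩ := hP hpP
    have hFlatN : N.IsFlat Dᶜ := cocircuit'_compl_flat hNE hD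
    have hFlatM : M.IsFlat Dᶜ := hMN _ hFlatN
    have hsub : C \ {p} ⊆ Dᶜ := by
      rintro x ⟨hxC, hxp⟩ hxD
      rcases hDsub hxD with hx2 | hx2
      · rcases hCsub hxC with hx1 | hx1
        · exact hx2 hx1
        · have hx1 : x = q := hx1
          subst hx1
          have h1 : p ≤ x := hDmin.2 x hxD
          have h2 : x ≤ p := hCmin.2 p hpC
          exact hqB ((le_antisymm h2 h1) ▸ hpB)
      · exact hxp hx2
    have hp_cl : p ∈ M.closure (C \ {p}) := circuit'_mem_closure hC hpC
    have : M.closure (C \ {p}) ⊆ Dᶜ := by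
      have := M.closure_subset_closure hsub
      rwa [hFlatM.closure] at this
    exact (this hp_cl) hDmin.1
  have hCq : C \ {q} ⊆ B \ P := by
    rintro x ⟨hxC, hxq⟩
    rcases hCsub hxC with hx1 | hx1
    · exact ⟨hx1, fun hxP => hCP x hxP hxC⟩
    · exact absurd hx1 hxq
  have hq_cl : q ∈ M.closure (C \ {q}) := circuit'_mem_closure hC hCmin.1
  exact M.closure_subset_closure hCq hq_cl
end

section
/- Let M→N be a matroid perspective on a finite linearly ordered ground set E. For every A ⊆ E there exists a unique B ⊆ E that is independent in M and spanning in N such that B∖Int_N(B) ⊆ A ⊆ B∪Ext_M(B). In other words, the intervals [B∖Int_N(B), B∪Ext_M(B)], as B ranges over all subsets of E that are independent in M and spanning in N, partition the power set of E. -/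
open Set

namespace MP

variable {α : Type*} {M N : Matroid α} {X C D B : Set α} {e f x r : α}

lemma sg (hE : M.E = Set.univ) (X : Set α) : X ⊆ M.E := by
  rw [hE]; exact Set.subset_univ X

lemma dep_iff (hE : M.E = Set.univ) : M.Dep X ↔ ¬ M.Indep X :=
  ⟨Matroid.Dep.not_indep, fun h => ⟨h, sg hE X⟩⟩

lemma circuit_nonempty (hC : M.IsCircuit' C) : C.Nonempty := hC.1.nonempty

lemma exists_circuit_subset [Finite α] (hE : M.E = Set.univ) (hX : M.Dep X) :
    ∃ C, M.IsCircuit' C ∧ C ⊆ X := by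
  classical
  obtain ⟨C, hCS, hmin⟩ := Set.exists_min_image {Y | M.Dep Y ∧ Y ⊆ X} Set.ncard
    (Set.toFinite _) ⟨X, hX, subset_rfl⟩
  refine ⟨C, ⟨hCS.1, fun D hD hDC => ?_⟩, hCS.2⟩
  exact Set.eq_of_subset_of_ncard_le hDC (hmin D ⟨hD, hDC.trans hCS.2⟩) (Set.toFinite C)

lemma circuit_diff_indep (hE : M.E = Set.univ) (hC : M.IsCircuit' C) (hx : x ∈ C) :
    M.Indep (C \ {x}) := by
  by_contra h
  have h2 := hC.2 _ ((dep_iff hE).2 h) diff_subset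
  exact absurd (h2 ▸ hx) (fun hh => hh.2 rfl)

lemma circuit_mem_closure (hE : M.E = Set.univ) (hC : M.IsCircuit' C) (hx : x ∈ C) :
    x ∈ M.closure (C \ {x}) := by
  have hI := circuit_diff_indep hE hC hx
  have hd : M.Dep (insert x (C \ {x})) := by
    rw [Set.insert_diff_singleton, Set.insert_eq_of_mem hx]; exact hC.1
  exact (hI.insert_dep_iff.1 hd).1

lemma indep_iff_no_circuit [Finite α] (hE : M.E = Set.univ) :
    M.Indep X ↔ ∀ C, M.IsCircuit' C → ¬ C ⊆ X := by
  refine ⟨fun h C hC hCX => hC.1.not_indep (h.subset hCX), fun h => ?_⟩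
  by_contra hi
  obtain ⟨C, hC, hCX⟩ := exists_circuit_subset hE ((dep_iff hE).2 hi)
  exact h C hC hCX

lemma exists_circuit_of_mem_closure [Finite α] (hE : M.E = Set.univ)
    (hf : f ∈ M.closure X) (hfX : f ∉ X) :
    ∃ C, M.IsCircuit' C ∧ f ∈ C ∧ C ⊆ insert f X := by
  obtain ⟨I, hI⟩ := M.exists_isBasis X (sg hE X)
  have hfI : f ∈ M.closure I := by rw [hI.closure_eq_closure]; exact hf
  have hfnI : f ∉ I := fun h => hfX (hI.subset h)
  have hdep : M.Dep (insert f I) := hI.indep.insert_dep_iff.2 ⟨hfI, hfnI⟩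
  obtain ⟨C, hC, hCI⟩ := exists_circuit_subset hE hdep
  have hfC : f ∈ C := by
    by_contra hfC
    refine hC.1.not_indep (hI.indep.subset (fun y hy => ?_))
    rcases hCI hy with rfl | hyI
    · exact absurd hy hfC
    · exact hyI
  exact ⟨C, hC, hfC, hCI.trans (insert_subset_insert hI.subset)⟩

lemma strong_elimination [Finite α] (hE : M.E = Set.univ) {C₁ C₂ : Set α}
    (h₁ : M.IsCircuit' C₁) (h₂ : M.IsCircuit' C₂) (he₁ : e ∈ C₁) (he₂ : e ∈ C₂)
    (hf₁ : f ∈ C₁) (hf₂ : f ∉ C₂) :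
    ∃ C, M.IsCircuit' C ∧ f ∈ C ∧ C ⊆ (C₁ ∪ C₂) \ {e} := by
  have hef : f ≠ e := fun h => hf₂ (h ▸ he₂)
  set X := (C₁ ∪ C₂) \ {e, f} with hX
  have heX : e ∈ M.closure X := by
    refine M.closure_subset_closure (fun y hy => ?_) (circuit_mem_closure hE h₂ he₂)
    refine ⟨Or.inr hy.1, ?_⟩
    rintro (rfl | rfl)
    · exact hy.2 rfl
    · exact hf₂ hy.1
  have hfX : f ∈ M.closure X := by
    have h1 := circuit_mem_closure hE h₁ hf₁
    have hsub : C₁ \ {f} ⊆ insert e X := by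
      intro y hy
      by_cases hye : y = e
      · exact hye ▸ mem_insert _ _
      · exact Or.inr ⟨Or.inl hy.1, by rintro (rfl | rfl); exact hye rfl; exact hy.2 rfl⟩
    have h2 : M.closure (insert e X) = M.closure X :=
      Matroid.closure_insert_eq_of_mem_closure heX
    exact h2 ▸ (M.closure_subset_closure hsub h1)
  have hfnX : f ∉ X := fun h => h.2 (Or.inr rfl)
  obtain ⟨C, hC, hfC, hCX⟩ := exists_circuit_of_mem_closure hE hfX hfnX
  refine ⟨C, hC, hfC, fun y hy => ?_⟩
  rcases hCX hy with rfl | hyX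
  · exact ⟨Or.inl hf₁, by simp [hef]⟩
  · exact ⟨hyX.1, fun h => hyX.2 (Or.inl h)⟩


lemma dual_ground_univ (hE : N.E = Set.univ) : N✶.E = Set.univ := by
  rw [Matroid.dual_ground]; exact hE

lemma spanning_iff_no_cocircuit [Finite α] (hE : N.E = Set.univ) :
    N.Spanning B ↔ ∀ C, N✶.IsCircuit' C → ¬ C ⊆ Bᶜ := by
  have h1 : N.Spanning B ↔ N✶.Indep Bᶜ := by
    rw [Matroid.spanning_iff_compl_coindep (sg hE B), hE, ← Set.compl_eq_univ_diff]
  rw [h1, indep_iff_no_circuit (dual_ground_univ hE)]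

lemma closure_le_closure (hME : M.E = Set.univ) (hNE : N.E = Set.univ)
    (hMN : ∀ F, N.IsFlat F → M.IsFlat F) (X : Set α) : M.closure X ⊆ N.closure X := by
  rw [Matroid.closure_def N]
  refine subset_sInter (fun F hF => ?_)
  rw [Matroid.closure_def M]
  refine sInter_subset_of_mem ⟨hMN F hF.1, ?_⟩
  rw [hME]; rw [hNE] at hF
  exact hF.2

lemma closure_compl_cocircuit [Finite α] (hNE : N.E = Set.univ)
    (hD : N✶.IsCircuit' D) : N.closure Dᶜ ⊆ Dᶜ := by
  intro x hx
  by_contra hxD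
  rw [Set.notMem_compl_iff] at hxD
  have hco : N.Coindep (D \ {x}) := circuit_diff_indep (dual_ground_univ hNE) hD hxD
  have hsp : N.Spanning (N.E \ (D \ {x})) := hco.compl_spanning
  rw [hNE, ← Set.compl_eq_univ_diff] at hsp
  have hcompl : (D \ {x})ᶜ = insert x Dᶜ := by
    rw [Set.diff_eq, Set.compl_inter, compl_compl, Set.union_comm, Set.insert_eq]
  rw [hcompl] at hsp
  have hclo : N.closure (insert x Dᶜ) = N.closure Dᶜ :=
    Matroid.closure_insert_eq_of_mem_closure hx
  have hsp2 : N.Spanning Dᶜ := by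
    rw [Matroid.spanning_iff_closure_eq (sg hNE _), ← hclo,
      ← Matroid.spanning_iff_closure_eq (sg hNE _)]
    exact hsp
  have : N.Coindep D := by
    rw [Matroid.coindep_iff_compl_spanning (sg hNE D), hNE, ← Set.compl_eq_univ_diff]
    exact hsp2
  exact hD.1.not_indep this

lemma orth [Finite α] (hME : M.E = Set.univ) (hNE : N.E = Set.univ)
    (hMN : ∀ F, N.IsFlat F → M.IsFlat F) (hC : M.IsCircuit' C)
    (hD : N✶.IsCircuit' D) (x : α) (h : C ∩ D = {x}) : False := by
  have hxCD : x ∈ C ∩ D := h ▸ rfl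
  have h1 : x ∈ M.closure (C \ {x}) := circuit_mem_closure hME hC hxCD.1
  have h2 : C \ {x} ⊆ Dᶜ := by
    intro y hy hyD
    exact hy.2 (h ▸ (⟨hy.1, hyD⟩ : y ∈ C ∩ D))
  have h3 : x ∈ N.closure Dᶜ :=
    (N.closure_subset_closure h2) (closure_le_closure hME hNE hMN _ h1)
  exact (closure_compl_cocircuit hNE hD h3) hxCD.2


/-- The set of minima of circuits of `M` contained in `S`. -/
def Qset {α : Type*} [LinearOrder α] (M : Matroid α) (S : Set α) : Set α :=
  {e | ∃ C, M.IsCircuit' C ∧ C ⊆ S ∧ IsMinOf C e}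

lemma Qset_subset [LinearOrder α] (S : Set α) : Qset M S ⊆ S :=
  fun _ ⟨_, _, hCS, hmin⟩ => hCS hmin.1

section Weight
variable [Fintype α] [LinearOrder α]

/-- weight exponent -/
def kfn (x : α) : ℕ := (Finset.univ.filter (fun y => x < y)).card

lemma kfn_lt (h : x < f) : kfn f < kfn x := by
  apply Finset.card_lt_card
  constructor
  · intro z hz
    simp only [Finset.mem_filter, Finset.mem_univ, true_and] at *
    exact h.trans hz
  · intro hsub
    have : f ∈ Finset.univ.filter (fun y => x < y) := by
      simp only [Finset.mem_filter, Finset.mem_univ, true_and]; exact h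
    have := hsub this
    simp only [Finset.mem_filter, Finset.mem_univ, true_and] at this
    exact lt_irrefl f this

lemma geom_two (n : ℕ) : ∑ i ∈ Finset.range n, 2 ^ i = 2 ^ n - 1 := by
  induction n with
  | zero => simp
  | succ n ih =>
    rw [Finset.sum_range_succ, ih, pow_succ]
    have : 1 ≤ 2 ^ n := Nat.one_le_two_pow
    omega

lemma wsum_lt {T : Finset α} (hT : ∀ y ∈ T, x < y) :
    ∑ y ∈ T, 2 ^ kfn y < 2 ^ kfn x := by
  have hinj : ∀ y ∈ T, ∀ y' ∈ T, kfn y = kfn y' → y = y' := by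
    intro y _ y' _ h
    by_contra hne
    rcases lt_or_gt_of_ne hne with h' | h'
    · exact absurd h.symm (Nat.ne_of_lt (kfn_lt h'))
    · exact absurd h (Nat.ne_of_lt (kfn_lt h'))
  have h1 : ∑ y ∈ T, 2 ^ kfn y = ∑ i ∈ T.image kfn, 2 ^ i :=
    (Finset.sum_image hinj).symm
  have h2 : T.image kfn ⊆ Finset.range (kfn x) := by
    intro i hi
    rcases Finset.mem_image.1 hi with ⟨y, hy, rfl⟩
    exact Finset.mem_range.2 (kfn_lt (hT y hy))
  calc ∑ y ∈ T, 2 ^ kfn y = ∑ i ∈ T.image kfn, 2 ^ i := h1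
    _ ≤ ∑ i ∈ Finset.range (kfn x), 2 ^ i := Finset.sum_le_sum_of_subset h2
    _ = 2 ^ kfn x - 1 := geom_two _
    _ < 2 ^ kfn x := by have : 1 ≤ 2 ^ kfn x := Nat.one_le_two_pow; omega

/-- measure of a circuit relative to `r` and active set `R` -/
noncomputable def mu (R : Set α) (r : α) (C : Set α) : ℕ :=
  ∑ y ∈ (Set.toFinite ((C ∩ R) \ {r})).toFinset, 2 ^ kfn y

end Weight

lemma active_circuit [Fintype α] [LinearOrder α] (hE : M.E = Set.univ)
    {S : Set α} (hr : r ∈ Qset M S) :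
    ∃ C, M.IsCircuit' C ∧ C ⊆ (S \ Qset M S) ∪ {r} ∧ IsMinOf C r := by
  classical
  obtain ⟨C0, hC0, hC0S, hmin0⟩ := hr
  set R := Qset M S with hR
  suffices h : ∀ n (C : Set α), mu R r C ≤ n → M.IsCircuit' C → C ⊆ S → IsMinOf C r →
      ∃ C', M.IsCircuit' C' ∧ C' ⊆ (S \ R) ∪ {r} ∧ IsMinOf C' r by
    exact h (mu R r C0) C0 le_rfl hC0 hC0S hmin0
  intro n
  induction n using Nat.strong_induction_on with
  | _ n ih =>
    intro C hmu hC hCS hminC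
    by_cases hempty : ((C ∩ R) \ {r}) = ∅
    · refine ⟨C, hC, fun y hy => ?_, hminC⟩
      by_cases hyr : y = r
      · exact Or.inr hyr
      · refine Or.inl ⟨hCS hy, fun hyR => ?_⟩
        exact (Set.eq_empty_iff_forall_notMem.1 hempty y ⟨⟨hy, hyR⟩, hyr⟩).elim
    · obtain ⟨x, hx⟩ := Set.nonempty_iff_ne_empty.2 hempty
      obtain ⟨⟨hxC, hxR⟩, hxr⟩ := hx
      have hxr' : x ≠ r := hxr
      obtain ⟨Cx, hCx, hCxS, hminx⟩ := hxR
      have hrx : r < x := lt_of_le_of_ne (hminC.2 x hxC) (Ne.symm hxr')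
      have hrCx : r ∉ Cx := fun h => absurd (hminx.2 r h) (not_le.2 hrx)
      obtain ⟨C3, hC3, hrC3, hC3sub⟩ :=
        strong_elimination hE hC hCx hxC hminx.1 hminC.1 hrCx
      have hC3S : C3 ⊆ S := fun y hy => by
        rcases (hC3sub hy).1 with h | h
        · exact hCS h
        · exact hCxS h
      have hminC3 : IsMinOf C3 r := by
        refine ⟨hrC3, fun y hy => ?_⟩
        rcases (hC3sub hy).1 with h | h
        · exact hminC.2 y h
        · exact le_of_lt (lt_of_lt_of_le hrx (hminx.2 y h))
      -- measure decreases
      have hdec : mu R r C3 < mu R r C := by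
        unfold mu
        set T := (Set.toFinite ((C ∩ R) \ {r})).toFinset with hT
        set T3 := (Set.toFinite ((C3 ∩ R) \ {r})).toFinset with hT3
        have hxT : x ∈ T := by
          rw [hT, Set.Finite.mem_toFinset]; exact ⟨⟨hxC, ⟨Cx, hCx, hCxS, hminx⟩⟩, hxr'⟩
        have hsplit : T3 ⊆ (T.erase x) ∪ (T3 \ T) := by
          intro y hy
          by_cases hyT : y ∈ T
          · refine Finset.mem_union_left _ (Finset.mem_erase.2 ⟨?_, hyT⟩)
            rintro rfl
            rw [hT3, Set.Finite.mem_toFinset] at hy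
            exact (hC3sub hy.1.1).2 rfl
          · exact Finset.mem_union_right _ (Finset.mem_sdiff.2 ⟨hy, hyT⟩)
        have hdisj : Disjoint (T.erase x) (T3 \ T) := by
          refine Finset.disjoint_left.2 (fun y hy hy' => ?_)
          exact (Finset.mem_sdiff.1 hy').2 (Finset.mem_of_mem_erase hy)
        have hnew : ∀ y ∈ T3 \ T, x < y := by
          intro y hy
          rw [Finset.mem_sdiff, hT3, Set.Finite.mem_toFinset] at hy
          obtain ⟨⟨⟨hyC3, hyR⟩, hyr⟩, hyT⟩ := hy
          have hyCx : y ∈ Cx := by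
            rcases (hC3sub hyC3).1 with h | h
            · exact absurd (by rw [hT, Set.Finite.mem_toFinset]; exact ⟨⟨h, hyR⟩, hyr⟩) hyT
            · exact h
          exact lt_of_le_of_ne (hminx.2 y hyCx) (fun h => (hC3sub hyC3).2 (h ▸ rfl))
        calc ∑ y ∈ T3, 2 ^ kfn y ≤ ∑ y ∈ (T.erase x) ∪ (T3 \ T), 2 ^ kfn y :=
              Finset.sum_le_sum_of_subset hsplit
          _ = ∑ y ∈ T.erase x, 2 ^ kfn y + ∑ y ∈ T3 \ T, 2 ^ kfn y :=
              Finset.sum_union hdisj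
          _ < ∑ y ∈ T.erase x, 2 ^ kfn y + 2 ^ kfn x :=
              Nat.add_lt_add_left (wsum_lt hnew) _
          _ = ∑ y ∈ T, 2 ^ kfn y := Finset.sum_erase_add T _ hxT
      exact ih (mu R r C3) (lt_of_lt_of_le hdec hmu) C3 le_rfl hC3 hC3S hminC3

/-- no `M₁`-circuit fits inside `(A \ Q) ∪ P`. -/
lemma no_circuit_in_B [Fintype α] [LinearOrder α] {M₁ M₂ : Matroid α}
    (horth : ∀ C₁ C₂, M₁.IsCircuit' C₁ → M₂.IsCircuit' C₂ → ∀ x, C₁ ∩ C₂ ≠ {x})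
    (A : Set α) {C : Set α} (hC : M₁.IsCircuit' C)
    (hCB : C ⊆ (A \ Qset M₁ A) ∪ Qset M₂ Aᶜ) : False := by
  classical
  by_cases hCP : (C ∩ Qset M₂ Aᶜ) = ∅
  · have hCA : C ⊆ A \ Qset M₁ A := by
      intro y hy
      rcases hCB hy with h | h
      · exact h
      · exact (Set.eq_empty_iff_forall_notMem.1 hCP y ⟨hy, h⟩).elim
    obtain ⟨m, hmC, hmin⟩ := Set.exists_min_image C id (Set.toFinite C)
      (circuit_nonempty hC)
    exact (hCA hmC).2 ⟨C, hC, fun y hy => (hCA hy).1, hmC, hmin⟩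
  · obtain ⟨p, hpC, hpmax⟩ := Set.exists_max_image (C ∩ Qset M₂ Aᶜ) id
      (Set.toFinite _) (Set.nonempty_iff_ne_empty.2 hCP)
    obtain ⟨D, hD, hDA, hminD⟩ := hpC.2
    refine horth C D hC hD p ?_
    apply Set.eq_singleton_iff_unique_mem.2
    refine ⟨⟨hpC.1, hminD.1⟩, fun y hy => ?_⟩
    have hyP : y ∈ Qset M₂ Aᶜ := by
      rcases hCB hy.1 with h | h
      · exact absurd (hDA hy.2) (fun hh => hh h.1)
      · exact h
    exact le_antisymm (hpmax y ⟨hy.1, hyP⟩) (hminD.2 y hy.2)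


lemma lem_i [LinearOrder α] {M₁ M₂ : Matroid α}
    (horth : ∀ C₁ C₂, M₁.IsCircuit' C₁ → M₂.IsCircuit' C₂ → ∀ x, C₁ ∩ C₂ ≠ {x})
    {A B : Set α}
    (hAExt : A ⊆ B ∪ {e | e ∉ B ∧ ∃ C, M₁.IsCircuit' C ∧ C ⊆ B ∪ {e} ∧ IsMinOf C e})
    (hAcInt : Aᶜ ⊆ Bᶜ ∪ {e | e ∉ Bᶜ ∧ ∃ C, M₂.IsCircuit' C ∧ C ⊆ Bᶜ ∪ {e} ∧ IsMinOf C e})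
    {e : α} (heA : e ∈ A) (heB : e ∉ B) :
    ∃ C, M₁.IsCircuit' C ∧ C ⊆ (A ∩ B) ∪ {e} ∧ IsMinOf C e := by
  rcases hAExt heA with h | h
  · exact absurd h heB
  obtain ⟨-, C, hC, hCB, hmin⟩ := h
  refine ⟨C, hC, fun y hy => ?_, hmin⟩
  rcases hCB hy with hyB | hyr
  · by_cases hyA : y ∈ A
    · exact Or.inl ⟨hyA, hyB⟩
    · exfalso
      rcases hAcInt hyA with h' | h'
      · exact h' hyB
      obtain ⟨-, D, hD, hDB, hminD⟩ := h'
      refine horth C D hC hD y (Set.eq_singleton_iff_unique_mem.2 ⟨⟨hy, hminD.1⟩, ?_⟩)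
      intro z hz
      rcases hCB hz.1 with hzB | hzr
      · rcases hDB hz.2 with hzBc | hzy
        · exact absurd hzB hzBc
        · exact hzy
      · exfalso
        have hze : z = e := hzr
        have h1 : y ≤ e := hze ▸ hminD.2 z hz.2
        have h2 : e ≤ y := hmin.2 y hy
        exact heB ((le_antisymm h2 h1) ▸ hyB)
  · exact Or.inr hyr

lemma uniq_aux [Fintype α] [LinearOrder α] {M₁ : Matroid α} (hE1 : M₁.E = Set.univ)
    {A B₁ B₂ : Set α}
    (h1ind : ∀ C, M₁.IsCircuit' C → ¬ C ⊆ B₁)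
    (hw1 : ∀ x, x ∈ A → x ∉ B₁ → ∃ C, M₁.IsCircuit' C ∧ C ⊆ (A ∩ B₁) ∪ {x} ∧ IsMinOf C x)
    (hw2 : ∀ x, x ∈ A → x ∉ B₂ → ∃ C, M₁.IsCircuit' C ∧ C ⊆ (A ∩ B₂) ∪ {x} ∧ IsMinOf C x)
    {e : α} (heB1 : e ∈ B₁) (heB2 : e ∉ B₂) (heA : e ∈ A) : False := by
  obtain ⟨C0, hC0, hC0sub, hmin0⟩ := hw2 e heA heB2
  have hC0sub' : C0 ⊆ (A ∩ (B₁ ∪ B₂)) ∪ {e} :=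
    hC0sub.trans (union_subset_union_left _ (inter_subset_inter_right _ subset_union_right))
  suffices h : ∀ n (C : Set α), (C \ B₁).ncard ≤ n → M₁.IsCircuit' C →
      C ⊆ (A ∩ (B₁ ∪ B₂)) ∪ {e} → IsMinOf C e → False from
    h _ C0 le_rfl hC0 hC0sub' hmin0
  intro n
  induction n using Nat.strong_induction_on with
  | _ n ih =>
  intro C hn hC hCsub hminC
  by_cases hCB1 : C ⊆ B₁
  · exact h1ind C hC hCB1
  obtain ⟨x, hxC, hxB1⟩ := not_subset.1 hCB1
  have hxe : x ≠ e := fun h => hxB1 (h ▸ heB1)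
  have hxA : x ∈ A ∧ x ∈ B₂ := by
    rcases hCsub hxC with h | h
    · exact ⟨h.1, h.2.resolve_left hxB1⟩
    · exact absurd h hxe
  have hex : e < x := lt_of_le_of_ne (hminC.2 x hxC) (Ne.symm hxe)
  obtain ⟨Cx, hCx, hCxsub, hminx⟩ := hw1 x hxA.1 hxB1
  have heCx : e ∉ Cx := fun h => absurd (hminx.2 e h) (not_le.2 hex)
  obtain ⟨C3, hC3, heC3, hC3sub⟩ := strong_elimination hE1 hC hCx hxC hminx.1 hminC.1 heCx
  have hC3sub' : C3 ⊆ (A ∩ (B₁ ∪ B₂)) ∪ {e} := by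
    intro y hy
    rcases (hC3sub hy).1 with h | h
    · exact hCsub h
    · rcases hCxsub h with h' | h'
      · exact Or.inl ⟨h'.1, Or.inl h'.2⟩
      · exact absurd h' (hC3sub hy).2
  have hminC3 : IsMinOf C3 e := ⟨heC3, fun y hy => by
    rcases (hC3sub hy).1 with h | h
    · exact hminC.2 y h
    · exact le_of_lt (lt_of_lt_of_le hex (hminx.2 y h))⟩
  have hss : C3 \ B₁ ⊂ C \ B₁ := by
    rw [Set.ssubset_def]
    constructor
    · intro y hy
      obtain ⟨hyC3, hyB1⟩ := hy
      rcases (hC3sub hyC3).1 with h | h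
      · exact ⟨h, hyB1⟩
      · exfalso
        rcases hCxsub h with h' | h'
        · exact hyB1 h'.2
        · exact (hC3sub hyC3).2 h'
    · intro hsub
      exact (hC3sub (hsub ⟨hxC, hxB1⟩).1).2 rfl
  have hdec : (C3 \ B₁).ncard < (C \ B₁).ncard := Set.ncard_lt_ncard hss (Set.toFinite _)
  exact ih _ (lt_of_lt_of_le hdec hn) C3 le_rfl hC3 hC3sub' hminC3


end MP

open MP

/-- For a matroid perspective `M → N`, the intervals `[B ∖ Int_N(B), B ∪ Ext_M(B)]`,
where `B` ranges over the subsets of `E` independent in `M` and spanning in `N`,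
partition the power set of `E`. -/
theorem stmt10 {α : Type*} [Fintype α] [LinearOrder α] (M N : Matroid α)
    (hME : M.E = Set.univ) (hNE : N.E = Set.univ)
    (hMN : ∀ F, N.IsFlat F → M.IsFlat F) :
    ∀ A : Set α, ∃! B : Set α,
      M.Indep B ∧ N.Spanning B ∧ B \ IntSet N B ⊆ A ∧ A ⊆ B ∪ ExtSet M B := by
  intro A
  classical
  have hE2 : N✶.E = Set.univ := dual_ground_univ hNE
  have horth : ∀ C₁ C₂, M.IsCircuit' C₁ → N✶.IsCircuit' C₂ → ∀ x, C₁ ∩ C₂ ≠ {x} :=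
    fun C₁ C₂ h1 h2 x hx => orth hME hNE hMN h1 h2 x hx
  have horth' : ∀ C₁ C₂, N✶.IsCircuit' C₁ → M.IsCircuit' C₂ → ∀ x, C₁ ∩ C₂ ≠ {x} :=
    fun C₁ C₂ h1 h2 x hx => horth C₂ C₁ h2 h1 x (by rwa [Set.inter_comm])
  have hQA : Qset M A ⊆ A := Qset_subset A
  have hPA : Qset N✶ Aᶜ ⊆ Aᶜ := Qset_subset Aᶜ
  set B₀ : Set α := (A \ Qset M A) ∪ Qset N✶ Aᶜ with hB₀def
  have hB₀c : B₀ᶜ = (Aᶜ \ Qset N✶ Aᶜ) ∪ Qset M A := by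
    ext y
    simp only [hB₀def, Set.mem_compl_iff, Set.mem_union, Set.mem_diff, not_or, not_and, not_not]
    constructor
    · rintro ⟨h1, h2⟩
      by_cases hyA : y ∈ A
      · exact Or.inr (h1 hyA)
      · exact Or.inl ⟨hyA, h2⟩
    · rintro (⟨h1, h2⟩ | h1)
      · exact ⟨fun hyA => absurd hyA h1, h2⟩
      · exact ⟨fun _ => h1, fun hyP => (hPA hyP) (hQA h1)⟩
  -- existence
  have hB0ind : M.Indep B₀ :=
    (indep_iff_no_circuit hME).2 (fun C hC hCB => (no_circuit_in_B horth A hC hCB).elim)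
  have hB0coc : ∀ C, N✶.IsCircuit' C → ¬ C ⊆ B₀ᶜ := by
    intro C hC hCB
    rw [hB₀c] at hCB
    refine no_circuit_in_B horth' Aᶜ hC ?_
    rwa [compl_compl]
  have hB0span : N.Spanning B₀ := (spanning_iff_no_cocircuit hNE).2 hB0coc
  have hB0Ext : A ⊆ B₀ ∪ ExtSet M B₀ := by
    intro a ha
    by_cases hab : a ∈ B₀
    · exact Or.inl hab
    · have haQ : a ∈ Qset M A := by
        by_contra h
        exact hab (Or.inl ⟨ha, h⟩)
      obtain ⟨C, hC, hCsub, hmin⟩ := active_circuit hME haQ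
      refine Or.inr ⟨hab, C, hC, fun y hy => ?_, hmin⟩
      rcases hCsub hy with h | h
      · exact Or.inl (Or.inl h)
      · exact Or.inr h
  have hB0Int : B₀ \ IntSet N B₀ ⊆ A := by
    intro b hb
    by_contra hbA
    apply hb.2
    have hbP : b ∈ Qset N✶ Aᶜ := by
      rcases hb.1 with h | h
      · exact absurd h.1 hbA
      · exact h
    obtain ⟨C, hC, hCsub, hmin⟩ := active_circuit hE2 hbP
    refine ⟨hb.1, C, hC, fun y hy => ?_, hmin⟩
    rcases hCsub hy with h | h
    · refine Or.inl ?_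
      rw [hB₀c]
      exact Or.inl h
    · exact Or.inr h
  refine ⟨B₀, ⟨hB0ind, hB0span, hB0Int, hB0Ext⟩, ?_⟩
  -- uniqueness
  rintro B ⟨hBi, hBs, hBInt, hBExt⟩
  have hBind : ∀ C, M.IsCircuit' C → ¬ C ⊆ B := (indep_iff_no_circuit hME).1 hBi
  have hBcoc : ∀ C, N✶.IsCircuit' C → ¬ C ⊆ Bᶜ := (spanning_iff_no_cocircuit hNE).1 hBs
  have hint' : ∀ (B' : Set α), B' \ IntSet N B' ⊆ A →
      Aᶜ ⊆ B'ᶜ ∪ {e | e ∉ B'ᶜ ∧ ∃ C, N✶.IsCircuit' C ∧ C ⊆ B'ᶜ ∪ {e} ∧ IsMinOf C e} := by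
    intro B' hB'
    intro y hy
    by_cases hyB : y ∈ B'
    · refine Or.inr ?_
      have hyI : y ∈ IntSet N B' := by
        by_contra h
        exact hy (hB' ⟨hyB, h⟩)
      obtain ⟨h1, C, hC, hsub, hmin⟩ := hyI
      exact ⟨fun hc => hc h1, C, hC, hsub, hmin⟩
    · exact Or.inl hyB
  have hext' : ∀ (B' : Set α), A ⊆ B' ∪ ExtSet M B' →
      A ⊆ B' ∪ {e | e ∉ B' ∧ ∃ C, M.IsCircuit' C ∧ C ⊆ B' ∪ {e} ∧ IsMinOf C e} :=
    fun B' h => h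
  have hwB : ∀ x, x ∈ A → x ∉ B → ∃ C, M.IsCircuit' C ∧ C ⊆ (A ∩ B) ∪ {x} ∧ IsMinOf C x :=
    fun x hx1 hx2 => lem_i horth (hext' B hBExt) (hint' B hBInt) hx1 hx2
  have hwB0 : ∀ x, x ∈ A → x ∉ B₀ → ∃ C, M.IsCircuit' C ∧ C ⊆ (A ∩ B₀) ∪ {x} ∧ IsMinOf C x :=
    fun x hx1 hx2 => lem_i horth (hext' B₀ hB0Ext) (hint' B₀ hB0Int) hx1 hx2
  have hcompl : ∀ (B' : Set α), A ⊆ B' ∪ ExtSet M B' →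
      Aᶜᶜ ⊆ B'ᶜᶜ ∪ {e | e ∉ B'ᶜᶜ ∧ ∃ C, M.IsCircuit' C ∧ C ⊆ B'ᶜᶜ ∪ {e} ∧ IsMinOf C e} := by
    intro B' h
    simp only [compl_compl]
    exact hext' B' h
  have hwBc : ∀ x, x ∈ Aᶜ → x ∉ Bᶜ →
      ∃ C, N✶.IsCircuit' C ∧ C ⊆ (Aᶜ ∩ Bᶜ) ∪ {x} ∧ IsMinOf C x :=
    fun x hx1 hx2 => lem_i horth' (hint' B hBInt) (hcompl B hBExt) hx1 hx2
  have hwB0c : ∀ x, x ∈ Aᶜ → x ∉ B₀ᶜ →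
      ∃ C, N✶.IsCircuit' C ∧ C ⊆ (Aᶜ ∩ B₀ᶜ) ∪ {x} ∧ IsMinOf C x :=
    fun x hx1 hx2 => lem_i horth' (hint' B₀ hB0Int) (hcompl B₀ hB0Ext) hx1 hx2
  have h1 : ∀ y, y ∈ B → y ∉ B₀ → False := by
    intro y hyB hyB0
    by_cases hyA : y ∈ A
    · exact uniq_aux hME hBind hwB hwB0 hyB hyB0 hyA
    · exact uniq_aux hE2 hB0coc hwB0c hwBc (by exact hyB0) (by exact fun h => h hyB) hyA
  have h2 : ∀ y, y ∈ B₀ → y ∉ B → False := by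
    intro y hyB0 hyB
    by_cases hyA : y ∈ A
    · exact uniq_aux hME ((indep_iff_no_circuit hME).1 hB0ind) hwB0 hwB hyB0 hyB hyA
    · exact uniq_aux hE2 hBcoc hwBc hwB0c (by exact hyB) (by exact fun h => h hyB0) hyA
  ext y
  constructor
  · intro h
    by_contra h'
    exact h1 y h h'
  · intro h
    by_contra h'
    exact h2 y h h'
end

section
/- Let M→N be a matroid perspective on a finite linearly ordered ground set E. Let B ⊆ E be independent in M and spanning in N, and let A ⊆ E satisfy B∖Int_N(B) ⊆ A ⊆ B∪Ext_M(B). Then the following four equalities hold: Int_N(A) = Int_N(B) ∩ A, P_N(A) = Int_N(B) ∖ A, Ext_M(A) = Ext_M(B) ∖ A, and Q_M(A) = Ext_M(B) ∩ A. -/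
open Set

section Aux

variable {α : Type*}

lemma circ_diff_indep {M : Matroid α} {C : Set α} (hC : M.IsCircuit' C) {e : α} (he : e ∈ C) :
    M.Indep (C \ {e}) := by
  by_contra h
  have hdep : M.Dep (C \ {e}) := ⟨h, diff_subset.trans hC.1.subset_ground⟩
  have h2 := hC.2 _ hdep diff_subset
  have : e ∈ C \ {e} := h2.symm ▸ he
  exact this.2 rfl

lemma circ_mem_closure {M : Matroid α} {C : Set α} (hC : M.IsCircuit' C) {e : α} (he : e ∈ C) :
    e ∈ M.closure (C \ {e}) := by
  have hind := circ_diff_indep hC he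
  have hdep : M.Dep (insert e (C \ {e})) := by
    rw [insert_diff_singleton, insert_eq_self.2 he]
    exact hC.1
  exact ((hind.insert_dep_iff).1 hdep).1

lemma exists_circ_aux {M : Matroid α} :
    ∀ (n : ℕ) (X : Set α), X.Finite → X.ncard ≤ n → M.Dep X →
    ∃ C, C ⊆ X ∧ M.IsCircuit' C := by
  intro n
  induction n with
  | zero =>
    intro X hfin hn hX
    rw [Nat.le_zero, Set.ncard_eq_zero hfin] at hn
    exact absurd (hn ▸ M.empty_indep) hX.not_indep
  | succ n ih =>
    intro X hfin hn hX
    by_cases h : ∀ D, M.Dep D → D ⊆ X → D = X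
    · exact ⟨X, Subset.rfl, hX, h⟩
    · push_neg at h
      obtain ⟨D, hD, hDX, hne⟩ := h
      have hlt : D.ncard < X.ncard := Set.ncard_lt_ncard (hDX.ssubset_of_ne hne) hfin
      obtain ⟨C, hCD, hC⟩ := ih D (hfin.subset hDX) (by omega) hD
      exact ⟨C, hCD.trans hDX, hC⟩

lemma mem_closure_iff_circ [Fintype α] {M : Matroid α} (hME : M.E = univ) {Z : Set α} {e : α}
    (he : e ∉ Z) : e ∈ M.closure Z ↔ ∃ C, M.IsCircuit' C ∧ e ∈ C ∧ C ⊆ insert e Z := by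
  constructor
  · intro hecl
    obtain ⟨I, hI⟩ := M.exists_isBasis Z (by rw [hME]; exact subset_univ _)
    have heI : e ∈ M.closure I := by rwa [hI.closure_eq_closure]
    have heI' : e ∉ I := fun h => he (hI.subset h)
    have hdep : M.Dep (insert e I) := hI.indep.insert_dep_iff.2 ⟨heI, heI'⟩
    obtain ⟨C, hCsub, hC⟩ := exists_circ_aux _ _ (Set.toFinite _) le_rfl hdep
    have heC : e ∈ C := by
      by_contra heC
      have hCI : C ⊆ I := fun x hx =>
        (mem_insert_iff.1 (hCsub hx)).resolve_left (by rintro rfl; exact heC hx)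
      exact hC.1.not_indep (hI.indep.subset hCI)
    exact ⟨C, hC, heC, hCsub.trans (insert_subset_insert hI.subset)⟩
  · rintro ⟨C, hC, heC, hCsub⟩
    refine M.closure_subset_closure ?_ (circ_mem_closure hC heC)
    rintro x ⟨hxC, hxe⟩
    exact (mem_insert_iff.1 (hCsub hxC)).resolve_left (fun h => hxe (by simp [h]))

lemma gen_char [Fintype α] [LinearOrder α] {M : Matroid α} (hME : M.E = univ) {Y : Set α} {e : α}
    (he : e ∉ Y) :
    (∃ C, M.IsCircuit' C ∧ C ⊆ Y ∪ {e} ∧ IsMinOf C e) ↔ e ∈ M.closure (Y ∩ Set.Ioi e) := by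
  constructor
  · rintro ⟨C, hC, hCsub, heC, hmin⟩
    refine M.closure_subset_closure (?_ : C \ {e} ⊆ Y ∩ Set.Ioi e) (circ_mem_closure hC heC)
    rintro x ⟨hxC, hxe⟩
    have hxe' : x ≠ e := by simpa using hxe
    have hxY : x ∈ Y := by
      rcases hCsub hxC with h | h
      · exact h
      · exact absurd (by simpa using h) hxe'
    exact ⟨hxY, lt_of_le_of_ne (hmin x hxC) (Ne.symm hxe')⟩
  · intro h
    have hnot : e ∉ Y ∩ Set.Ioi e := fun h' => lt_irrefl e h'.2
    obtain ⟨C, hC, heC, hCsub⟩ := (mem_closure_iff_circ hME hnot).1 h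
    refine ⟨C, hC, ?_, heC, ?_⟩
    · intro x hx
      rcases mem_insert_iff.1 (hCsub hx) with rfl | hx'
      · exact Or.inr rfl
      · exact Or.inl hx'.1
    · intro x hx
      rcases mem_insert_iff.1 (hCsub hx) with rfl | hx'
      · exact le_refl x
      · exact le_of_lt hx'.2

lemma extSet_eq [Fintype α] [LinearOrder α] {M : Matroid α} (hME : M.E = univ) (X : Set α) :
    ExtSet M X = {e | e ∉ X ∧ e ∈ M.closure (X ∩ Set.Ioi e)} := by
  ext e
  simp only [ExtSet, mem_setOf_eq, and_congr_right_iff]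
  intro he
  exact gen_char hME he

lemma qActSet_eq [Fintype α] [LinearOrder α] {M : Matroid α} (hME : M.E = univ) (X : Set α) :
    QActSet M X = {e | e ∈ X ∧ e ∈ M.closure (X ∩ Set.Ioi e)} := by
  ext e
  simp only [QActSet, mem_setOf_eq, and_congr_right_iff]
  intro he
  have h1 : (X \ {e}) ∪ {e} = X := by
    rw [diff_union_self, union_singleton, insert_eq_self.2 he]
  have h2 : (X \ {e}) ∩ Set.Ioi e = X ∩ Set.Ioi e := by
    ext x
    simp only [mem_inter_iff, mem_diff, mem_singleton_iff, mem_Ioi]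
    constructor
    · rintro ⟨⟨h, _⟩, h'⟩; exact ⟨h, h'⟩
    · rintro ⟨h, h'⟩; exact ⟨⟨h, fun hh => lt_irrefl e (hh ▸ h')⟩, h'⟩
  rw [← h2, ← gen_char hME (fun h => h.2 rfl), h1]

lemma intSet_eq_ext [LinearOrder α] (N : Matroid α) (X : Set α) :
    IntSet N X = ExtSet N✶ Xᶜ := by
  ext e
  simp [IntSet, ExtSet, Matroid.IsCocircuit']

lemma pActSet_eq_q [LinearOrder α] (N : Matroid α) (X : Set α) :
    PActSet N X = QActSet N✶ Xᶜ := by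
  ext e
  simp [PActSet, QActSet, Matroid.IsCocircuit']

lemma intSet_eq [Fintype α] [LinearOrder α] {N : Matroid α} (hNE : N.E = univ) (X : Set α) :
    IntSet N X = {e | e ∈ X ∧ e ∈ N✶.closure (Xᶜ ∩ Set.Ioi e)} := by
  rw [intSet_eq_ext, extSet_eq (show N✶.E = univ by simp [hNE])]
  ext e
  simp only [mem_setOf_eq, mem_compl_iff, not_not]

lemma pActSet_eq [Fintype α] [LinearOrder α] {N : Matroid α} (hNE : N.E = univ) (X : Set α) :
    PActSet N X = {e | e ∉ X ∧ e ∈ N✶.closure (Xᶜ ∩ Set.Ioi e)} := by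
  rw [pActSet_eq_q, qActSet_eq (show N✶.E = univ by simp [hNE])]
  ext e
  simp only [mem_setOf_eq, mem_compl_iff]

lemma flat_of_closure_subset {M : Matroid α} {F : Set α} (hFE : F ⊆ M.E)
    (h : M.closure F ⊆ F) : M.IsFlat F :=
  ⟨fun _ _ hIF hIX => hIX.subset_closure.trans (hIF.closure_eq_closure ▸ h), hFE⟩

lemma cocirc_compl_flat {N : Matroid α} (hNE : N.E = univ) {D : Set α}
    (hD : N.IsCocircuit' D) : N.IsFlat Dᶜ := by
  have hsub : Dᶜ ⊆ N.E := by rw [hNE]; exact subset_univ _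
  refine flat_of_closure_subset hsub ?_
  intro x hx
  by_contra hxD
  rw [notMem_compl_iff] at hxD
  have hind : N✶.Indep (D \ {x}) := circ_diff_indep hD hxD
  have hspan : N.Spanning (N.E \ (D \ {x})) := Matroid.Coindep.compl_spanning hind
  have hEq : N.E \ (D \ {x}) = insert x Dᶜ := by
    rw [hNE]; ext y; simp [mem_diff]; tauto
  rw [hEq] at hspan
  have hcl : N.closure (insert x Dᶜ) = N.closure Dᶜ :=
    Matroid.closure_insert_eq_of_mem_closure hx
  have hsp2 : N.Spanning Dᶜ := by
    rw [Matroid.spanning_iff_closure_eq hsub, ← hcl]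
    exact hspan.closure_eq
  have hco : N.Coindep (N.E \ Dᶜ) :=
    (Matroid.spanning_iff_compl_coindep hsub).1 hsp2
  have hED : N.E \ Dᶜ = D := by rw [hNE]; simp
  rw [hED] at hco
  exact hD.1.not_indep hco

lemma orth {M N : Matroid α} (hNE : N.E = univ)
    (hMN : ∀ F, N.IsFlat F → M.IsFlat F) {C D : Set α} {e : α}
    (hC : M.IsCircuit' C) (hD : N.IsCocircuit' D) (heC : e ∈ C) (heD : e ∈ D) :
    ∃ f, f ∈ C ∧ f ∈ D ∧ f ≠ e := by
  by_contra h
  push_neg at h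
  have hflatM := hMN _ (cocirc_compl_flat hNE hD)
  have hsub : C \ {e} ⊆ Dᶜ := by
    rintro x ⟨hxC, hxe⟩ hxD
    exact (show x ≠ e by simpa using hxe) (h x hxC hxD)
  have hmem : e ∈ M.closure Dᶜ :=
    M.closure_subset_closure hsub (circ_mem_closure hC heC)
  rw [hflatM.closure] at hmem
  exact hmem heD

lemma keyLem [Fintype α] [LinearOrder α] {M N : Matroid α}
    (hME : M.E = univ)
    (hO : ∀ C D x, M.IsCircuit' C → N.IsCocircuit' D → x ∈ C → x ∈ D →
      ∃ f, f ∈ C ∧ f ∈ D ∧ f ≠ x)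
    {B A : Set α} (hBi : M.Indep B)
    (h1 : B \ IntSet N B ⊆ A) (h2 : A ⊆ B ∪ ExtSet M B) (e : α) :
    e ∈ M.closure (A ∩ Set.Ioi e) ↔ e ∉ B ∧ e ∈ M.closure (B ∩ Set.Ioi e) := by
  constructor
  · intro h
    have hsub : A ∩ Set.Ioi e ⊆ M.closure (B ∩ Set.Ioi e) := by
      rintro a ⟨haA, hae⟩
      by_cases haB : a ∈ B
      · exact M.mem_closure_of_mem ⟨haB, hae⟩ (by rw [hME]; exact subset_univ _)
      · have hext : a ∈ ExtSet M B := (h2 haA).resolve_left haB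
        rw [extSet_eq hME] at hext
        exact M.closure_subset_closure
          (inter_subset_inter_right B (Set.Ioi_subset_Ioi (le_of_lt hae))) hext.2
    have he2 : e ∈ M.closure (B ∩ Set.Ioi e) :=
      M.closure_subset_closure_of_subset_closure hsub h
    refine ⟨fun heB => ?_, he2⟩
    refine hBi.notMem_closure_diff_of_mem heB (M.closure_subset_closure ?_ he2)
    rintro x ⟨hxB, hxe⟩
    exact ⟨hxB, fun hh => lt_irrefl e ((show x = e by simpa using hh) ▸ hxe)⟩
  · rintro ⟨heB, hecl⟩
    obtain ⟨C, hC, heC, hCsub⟩ :=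
      (mem_closure_iff_circ hME (fun h' => heB h'.1)).1 hecl
    have hsub : C \ {e} ⊆ A ∩ Set.Ioi e := by
      rintro x ⟨hxC, hxe⟩
      have hxB : x ∈ B ∩ Set.Ioi e :=
        (mem_insert_iff.1 (hCsub hxC)).resolve_left (by simpa using hxe)
      refine ⟨h1 ⟨hxB.1, fun hxInt => ?_⟩, hxB.2⟩
      obtain ⟨-, D, hD, hDsub, hxD, hmin⟩ := hxInt
      obtain ⟨f, hfC, hfD, hfx⟩ := hO C D x hC hD hxC hxD
      rcases mem_insert_iff.1 (hCsub hfC) with rfl | hfB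
      · exact absurd (hmin _ hfD) (not_le.2 (mem_Ioi.1 hxB.2))
      · rcases hDsub hfD with hfBc | hfx'
        · exact hfBc hfB.1
        · exact hfx (by simpa using hfx')
    exact M.closure_subset_closure hsub (circ_mem_closure hC heC)

end Aux

/-- For a matroid perspective `M → N`, `B` independent in `M` and spanning in `N`,
and `A ∈ [B ∖ Int_N(B), B ∪ Ext_M(B)]`:
`Int_N(A) = Int_N(B) ∩ A`, `P_N(A) = Int_N(B) ∖ A`,
`Ext_M(A) = Ext_M(B) ∖ A`, and `Q_M(A) = Ext_M(B) ∩ A`. -/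
theorem stmt11 {α : Type*} [Fintype α] [LinearOrder α] (M N : Matroid α)
    (hME : M.E = Set.univ) (hNE : N.E = Set.univ)
    (hMN : ∀ F, N.IsFlat F → M.IsFlat F)
    (B : Set α) (hBi : M.Indep B) (hBs : N.Spanning B)
    (A : Set α) (h1 : B \ IntSet N B ⊆ A) (h2 : A ⊆ B ∪ ExtSet M B) :
    IntSet N A = IntSet N B ∩ A ∧ PActSet N A = IntSet N B \ A ∧
      ExtSet M A = ExtSet M B \ A ∧ QActSet M A = ExtSet M B ∩ A := by
  have hNE' : N✶.E = Set.univ := by simp [hNE]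
  have hO : ∀ C D x, M.IsCircuit' C → N.IsCocircuit' D → x ∈ C → x ∈ D →
      ∃ f, f ∈ C ∧ f ∈ D ∧ f ≠ x :=
    fun C D x hC hD hxC hxD => orth hNE hMN hC hD hxC hxD
  have hO' : ∀ C D x, (N✶).IsCircuit' C → (M✶).IsCocircuit' D → x ∈ C → x ∈ D →
      ∃ f, f ∈ C ∧ f ∈ D ∧ f ≠ x := by
    intro C D x hC hD hxC hxD
    have hD' : M.IsCircuit' D := by rwa [Matroid.IsCocircuit', Matroid.dual_dual] at hD
    obtain ⟨f, hfD, hfC, hfx⟩ := hO D C x hD' hC hxD hxC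
    exact ⟨f, hfC, hfD, hfx⟩
  have hBi' : N✶.Indep Bᶜ := by
    have hco := (Matroid.spanning_iff_compl_coindep (by rw [hNE]; exact subset_univ _)).1 hBs
    rwa [Matroid.coindep_def, show N.E \ B = Bᶜ by
      rw [hNE]; exact (compl_eq_univ_diff B).symm] at hco
  have hIntE : IntSet M✶ Bᶜ = ExtSet M B := by
    rw [intSet_eq_ext, Matroid.dual_dual, compl_compl]
  have hExtI : ExtSet N✶ Bᶜ = IntSet N B := (intSet_eq_ext N B).symm
  have h1' : Bᶜ \ IntSet M✶ Bᶜ ⊆ Aᶜ := by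
    rw [hIntE]
    rintro x ⟨hxB, hxE⟩ hxA
    rcases h2 hxA with h | h
    · exact hxB h
    · exact hxE h
  have h2' : Aᶜ ⊆ Bᶜ ∪ ExtSet N✶ Bᶜ := by
    rw [hExtI]
    intro x hx
    by_cases hxB : x ∈ B
    · by_cases hxI : x ∈ IntSet N B
      · exact Or.inr hxI
      · exact absurd (h1 ⟨hxB, hxI⟩) hx
    · exact Or.inl hxB
  have key1 := keyLem hME hO hBi h1 h2
  have key2 := keyLem hNE' hO' hBi' h1' h2'
  have key2' : ∀ x, x ∈ N✶.closure (Aᶜ ∩ Set.Ioi x) ↔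
      x ∈ B ∧ x ∈ N✶.closure (Bᶜ ∩ Set.Ioi x) := by
    intro x
    rw [key2 x, notMem_compl_iff]
  refine ⟨?_, ?_, ?_, ?_⟩
  · rw [intSet_eq hNE, intSet_eq hNE]
    ext x
    simp only [mem_setOf_eq, mem_inter_iff, key2' x]
    tauto
  · rw [pActSet_eq hNE, intSet_eq hNE]
    ext x
    simp only [mem_setOf_eq, mem_diff, key2' x]
    tauto
  · rw [extSet_eq hME, extSet_eq hME]
    ext x
    simp only [mem_setOf_eq, mem_diff, key1 x]
    tauto
  · rw [qActSet_eq hME, extSet_eq hME]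
    ext x
    simp only [mem_setOf_eq, mem_inter_iff, key1 x]
    tauto
end

section
/- Let M be a matroid on a finite linearly ordered ground set E and let A ⊆ E. Then |P_M(A)| = r(M) − r_M(A), where P_M(A) = {e ∈ E∖A : e = min(C) for some cocircuit C of M with C ⊆ E∖A}. In particular |P_M(A)| does not depend on the linear ordering of E. -/
open Set

section Helpers

set_option linter.unusedSectionVars false

variable {α : Type*} [Fintype α] [LinearOrder α] {M : Matroid α}

lemma rk'_eq_of_basis {I X : Set α} (hI : M.IsBasis I X) : M.rk' X = I.ncard := by
  have hub : ∀ n ∈ {n : ℕ | ∃ J, J ⊆ X ∧ M.Indep J ∧ J.ncard = n}, n ≤ I.ncard := by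
    rintro n ⟨J, hJX, hJ, rfl⟩
    obtain ⟨J', hJ', hJJ'⟩ := hJ.subset_isBasis_of_subset hJX hI.subset_ground
    have h1 : J.ncard ≤ J'.ncard := Set.ncard_le_ncard hJJ' (Set.toFinite _)
    have h2 : J'.encard = I.encard := hJ'.encard_eq_encard hI
    have : J'.ncard = I.ncard := by
      simp only [Set.ncard_def, h2]
    omega
  refine le_antisymm (csSup_le ⟨0, ∅, by simp⟩ hub) ?_
  exact le_csSup ⟨I.ncard, hub⟩ ⟨I, hI.subset, hI.indep, rfl⟩

lemma rk'_insert_of_not_mem_closure (hME : M.E = univ) {X : Set α} {e : α}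
    (he : e ∉ M.closure X) : M.rk' (insert e X) = M.rk' X + 1 := by
  obtain ⟨I, hI⟩ := M.exists_isBasis X (by simp [hME])
  have heI : e ∉ M.closure I := by rwa [hI.closure_eq_closure]
  have heI' : e ∉ I := fun h => heI (M.subset_closure I (by simp [hME]) h)
  have hind : M.Indep (insert e I) := by
    rw [hI.indep.insert_indep_iff_of_notMem heI']
    exact ⟨by simp [hME], heI⟩
  have hB : M.IsBasis (insert e I) (insert e X) := by
    refine hind.isBasis_of_subset_of_subset_closure (insert_subset_insert hI.subset) ?_
    refine insert_subset (M.subset_closure _ (by simp [hME]) (mem_insert _ _)) ?_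
    exact hI.subset_closure.trans (M.closure_subset_closure (subset_insert _ _))
  rw [rk'_eq_of_basis hB, rk'_eq_of_basis hI, Set.ncard_insert_of_notMem heI' (Set.toFinite _)]

lemma rk'_insert_of_mem_closure (hME : M.E = univ) {X : Set α} {e : α}
    (he : e ∈ M.closure X) : M.rk' (insert e X) = M.rk' X := by
  obtain ⟨I, hI⟩ := M.exists_isBasis X (by simp [hME])
  have hB : M.IsBasis I (insert e X) := by
    refine hI.indep.isBasis_of_subset_of_subset_closure (hI.subset.trans (subset_insert _ _)) ?_
    refine insert_subset ?_ hI.subset_closure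
    rwa [hI.closure_eq_closure]
  rw [rk'_eq_of_basis hB, rk'_eq_of_basis hI]

lemma mem_P_iff (hME : M.E = univ) {A : Set α} {e : α} :
    e ∈ PActSet M A ↔ e ∉ M.closure (A ∪ {x | x < e}) := by
  set X : Set α := A ∪ {x | x < e} with hX
  constructor
  · rintro ⟨heA, C, ⟨hCdep, hCmin⟩, hCA, heC, hmin⟩
    intro hecl
    -- X is disjoint from C
    have hXC : X ⊆ univ \ C := by
      rintro x (hx | hx)
      · exact ⟨trivial, fun hxC => hCA hxC hx⟩
      · exact ⟨trivial, fun hxC => absurd (hmin x hxC) (not_le.mpr hx)⟩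
    obtain ⟨I, hI⟩ := M.exists_isBasis (univ \ C) (by simp [hME])
    have heI : e ∈ M.closure I := by
      rw [hI.closure_eq_closure]
      exact M.closure_subset_closure hXC hecl
    -- C \ {e} is dual-independent
    have hCe : M✶.Indep (C \ {e}) := by
      by_contra hdep
      have : M✶.Dep (C \ {e}) := ⟨hdep, by simp [hME]⟩
      have := hCmin _ this diff_subset
      exact (this ▸ (fun (h : e ∈ C \ {e}) => h.2 rfl)) heC
    obtain ⟨-, B, hB, hdisj⟩ := Matroid.dual_indep_iff_exists'.mp hCe
    -- B ⊆ cl I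
    have hBcl : B ⊆ M.closure I := by
      intro x hxB
      by_cases hxC : x ∈ C
      · have hxe : x = e := by
          by_contra hne
          exact hdisj.ne_of_mem ⟨hxC, hne⟩ hxB rfl
        exact hxe ▸ heI
      · exact hI.subset_closure ⟨trivial, hxC⟩
    have hIbase : M.IsBase I := by
      refine hI.indep.isBase_of_ground_subset_closure ?_
      have h1 : M.closure B ⊆ M.closure I := by
        have := M.closure_subset_closure_of_subset_closure hBcl
        simpa using this
      calc M.E = M.closure B := hB.closure_eq.symm
        _ ⊆ M.closure I := h1
    -- I is a base disjoint from C, contradicting dual dependence of C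
    have : M✶.Indep C :=
      Matroid.dual_indep_iff_exists'.mpr ⟨by simp [hME],
        I, hIbase, Set.disjoint_left.mpr (fun x hx => fun hxI => (hI.subset hxI).2 hx)⟩
    exact hCdep.not_indep this
  · intro hecl
    have heA : e ∉ A := fun h =>
      hecl (M.subset_closure X (by simp [hME]) (Or.inl h))
    -- find a maximal closed set containing X avoiding e
    have hfin : {H : Set α | M.closure H = H ∧ X ⊆ H ∧ e ∉ H}.Finite := Set.toFinite _
    obtain ⟨H, ⟨hHcl, hXH, heH⟩, hmax⟩ :=
      Set.Finite.exists_maximalFor id _ hfin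
        ⟨M.closure X, M.closure_closure X, M.subset_closure X (by simp [hME]), hecl⟩
    -- for any f ∉ H, e ∈ cl (insert f H)
    have key1 : ∀ f, f ∉ H → e ∈ M.closure (insert f H) := by
      intro f hf
      by_contra he'
      have hmem : M.closure (insert f H) ∈ {H : Set α | M.closure H = H ∧ X ⊆ H ∧ e ∉ H} := by
        refine ⟨M.closure_closure _, ?_, he'⟩
        exact hXH.trans ((subset_insert _ _).trans (M.subset_closure _ (by simp [hME])))
      have hsub : H ⊆ M.closure (insert f H) :=
        (subset_insert _ _).trans (M.subset_closure _ (by simp [hME]))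
      have := hmax hmem hsub
      exact hf ((show M.closure (insert f H) ⊆ H from this) (M.subset_closure _ (by simp [hME]) (mem_insert _ _)))
    -- for any f ∉ H, cl (insert f H) = univ
    have key2 : ∀ f, f ∉ H → M.closure (insert f H) = univ := by
      intro f hf
      refine eq_univ_of_forall fun g => ?_
      by_cases hg : g ∈ H
      · exact M.subset_closure _ (by simp [hME]) (mem_insert_of_mem _ hg)
      · have hge : g ∈ M.closure (insert e H) := by
          have : e ∈ M.closure (insert g H) \ M.closure H := by
            refine ⟨key1 g hg, ?_⟩
            rw [hHcl]; exact heH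
          exact (Matroid.closure_exchange this).1
        have hsub : M.closure (insert e H) ⊆ M.closure (insert f H) := by
          have h1 : insert e H ⊆ M.closure (insert f H) :=
            insert_subset (key1 f hf) ((subset_insert _ _).trans (M.subset_closure _ (by simp [hME])))
          simpa using M.closure_subset_closure_of_subset_closure h1
        exact hsub hge
    -- C := Hᶜ is the cocircuit
    refine ⟨heA, Hᶜ, ⟨?_, ?_⟩, ?_, ?_, ?_⟩
    · -- M✶.Dep Hᶜ
      rw [Matroid.dep_iff]
      refine ⟨?_, by simp [hME]⟩
      intro hind
      obtain ⟨-, B, hB, hdisj⟩ := Matroid.dual_indep_iff_exists'.mp hind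
      have hBH : B ⊆ H := fun x hx => by
        by_contra hxH
        exact hdisj.ne_of_mem hxH hx rfl
      have : M.E ⊆ H := by
        rw [← hB.closure_eq, ← hHcl]
        exact M.closure_subset_closure hBH
      exact heH (this (by simp [hME]))
    · -- minimality
      intro D hD hDC
      by_contra hne
      obtain ⟨f, hfC, hfD⟩ := exists_of_ssubset (ssubset_of_ne_of_subset hne hDC)
      obtain ⟨I, hI⟩ := M.exists_isBasis (insert f H) (by simp [hME])
      have hIbase : M.IsBase I := by
        refine hI.indep.isBase_of_ground_subset_closure ?_
        rw [hI.closure_eq_closure, key2 f hfC]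
        exact subset_univ _
      have : M✶.Indep D := by
        refine Matroid.dual_indep_iff_exists'.mpr ⟨by simp [hME], I, hIbase, ?_⟩
        refine Set.disjoint_left.mpr fun x hxD hxI => ?_
        rcases hI.subset hxI with rfl | hxH
        · exact hfD hxD
        · exact (hDC hxD) hxH
      exact hD.not_indep this
    · exact fun x hx hxA => hx (hXH (Or.inl hxA))
    · exact heH
    · intro x hx
      by_contra hlt
      exact hx (hXH (Or.inr (not_le.mp hlt)))

lemma count_empty (hME : M.E = univ) (A : Set α) (e : α) (hempty : Iio e = ∅) :
    M.rk' (A ∪ Iic e) = M.rk' A +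
      ({x | x ∉ M.closure (A ∪ Iio x)} ∩ Iic e).ncard := by
  set P : Set α := {x | x ∉ M.closure (A ∪ Iio x)} with hP
  have hIic : Iic e = insert e (Iio e) := by
    ext x; simp [le_iff_lt_or_eq, or_comm]
  have hU : A ∪ Iic e = insert e A := by
    rw [hIic, hempty]; simp
  have hPsub : P ∩ Iic e ⊆ {e} := by
    rintro x ⟨hxP, hxe⟩
    rcases lt_or_eq_of_le hxe with h | h
    · exact absurd (hempty ▸ h : x ∈ (∅ : Set α)) (notMem_empty x)
    · exact h
  by_cases heP : e ∈ P
  · have h1 : e ∉ M.closure A := by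
      have := heP; rw [hP, mem_setOf_eq, hempty, union_empty] at this; exact this
    have h2 : P ∩ Iic e = {e} := by
      refine subset_antisymm hPsub ?_
      rintro x rfl; exact ⟨heP, le_refl _⟩
    rw [hU, rk'_insert_of_not_mem_closure hME h1, h2, Set.ncard_singleton]
  · have h1 : e ∈ M.closure A := by
      by_contra h
      exact heP (by rw [hP, mem_setOf_eq, hempty, union_empty]; exact h)
    have h2 : P ∩ Iic e = ∅ := by
      refine eq_empty_of_forall_notMem fun x hx => ?_
      have := hPsub hx
      rw [mem_singleton_iff] at this
      exact heP (this ▸ hx.1)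
    rw [hU, rk'_insert_of_mem_closure hME h1, h2, Set.ncard_empty, Nat.add_zero]

lemma count (hME : M.E = univ) (A : Set α) :
    ∀ n : ℕ, ∀ e : α, (Iio e).ncard ≤ n →
      M.rk' (A ∪ Iic e) = M.rk' A +
        ({x | x ∉ M.closure (A ∪ Iio x)} ∩ Iic e).ncard := by
  set P : Set α := {x | x ∉ M.closure (A ∪ Iio x)} with hP
  intro n
  induction n with
  | zero =>
    intro e he
    have hempty : Iio e = ∅ := by
      rwa [Nat.le_zero, Set.ncard_eq_zero (Set.toFinite _)] at he
    exact count_empty hME A e hempty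
  | succ n ih =>
    intro e he
    rcases (Iio e).eq_empty_or_nonempty with hempty | hne
    · exact count_empty hME A e hempty
    · obtain ⟨m, hm, hmax⟩ := Set.exists_max_image (Iio e) id (Set.toFinite _) hne
      have hIio : Iio e = Iic m := by
        ext x
        simp only [mem_Iio, mem_Iic]
        exact ⟨fun h => hmax x h, fun h => lt_of_le_of_lt h hm⟩
      have hcard : (Iio m).ncard ≤ n := by
        have hss : Iio m ⊂ Iio e := by
          rw [hIio]
          exact ⟨Iio_subset_Iic_self, fun h => absurd (h (mem_Iic.mpr (le_refl m))) (lt_irrefl m)⟩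
        have := Set.ncard_lt_ncard hss (Set.toFinite _)
        omega
      have IH := ih m hcard
      have hIic : Iic e = insert e (Iic m) := by
        rw [← hIio]
        ext x; simp [le_iff_lt_or_eq, or_comm]
      have hU : A ∪ Iic e = insert e (A ∪ Iic m) := by
        rw [hIic]; simp [Set.union_insert]
      have hclrw : M.closure (A ∪ Iio e) = M.closure (A ∪ Iic m) := by rw [hIio]
      have hem : ¬ (e ≤ m) := not_le.mpr hm
      by_cases heP : e ∈ P
      · have h1 : e ∉ M.closure (A ∪ Iic m) := by rw [← hclrw]; exact heP
        have h2 : P ∩ Iic e = insert e (P ∩ Iic m) := by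
          rw [hIic, Set.inter_insert_of_mem heP]
        rw [hU, rk'_insert_of_not_mem_closure hME h1, IH, h2,
          Set.ncard_insert_of_notMem (fun h => hem h.2) (Set.toFinite _)]
        omega
      · have h1 : e ∈ M.closure (A ∪ Iic m) := by
          by_contra h
          exact heP (by rw [hP, mem_setOf_eq, hclrw]; exact h)
        have h2 : P ∩ Iic e = P ∩ Iic m := by
          rw [hIic, Set.inter_insert_of_notMem heP]
        rw [hU, rk'_insert_of_mem_closure hME h1, IH, h2]

end Helpers

/-- `|P_M(A)| = r(M) − r_M(A)`; in particular it does not depend on the linear order. -/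
theorem stmt12 {α : Type*} [Fintype α] [LinearOrder α] (M : Matroid α)
    (hME : M.E = Set.univ) (A : Set α) :
    (PActSet M A).ncard = M.rk' Set.univ - M.rk' A := by
  rcases isEmpty_or_nonempty α with h | h
  · have hA : A = univ := Set.eq_univ_of_forall fun x => isEmptyElim x
    have hP : PActSet M A = ∅ := Set.eq_empty_of_isEmpty _
    rw [hP, hA, Set.ncard_empty, Nat.sub_self]
  · obtain ⟨t, ht⟩ := Finite.exists_max (id : α → α)
    have hIic : Iic t = univ := eq_univ_of_forall fun x => ht x
    have hPeq : PActSet M A = {x | x ∉ M.closure (A ∪ Iio x)} := by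
      ext x; exact mem_P_iff hME
    have hc := count hME A (Iio t).ncard t le_rfl
    rw [hIic, union_univ, inter_univ] at hc
    rw [hPeq]
    omega
end

section
/- Let M be a matroid on a finite linearly ordered ground set E and let A ⊆ E. Then |Q_M(A)| = |A| − r_M(A), where Q_M(A) = {e ∈ A : e = min(C) for some circuit C of M with C ⊆ A}. In particular |Q_M(A)| does not depend on the linear ordering of E. -/
section Aux

open Set

/-- Every dependent set contains a circuit. -/
lemma exists_circuit_subset' {α : Type*} [Fintype α] (M : Matroid α) {D : Set α}
    (hD : M.Dep D) : ∃ C, C ⊆ D ∧ M.IsCircuit' C := by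
  have main : ∀ n (D : Set α), D.ncard = n → M.Dep D → ∃ C, C ⊆ D ∧ M.IsCircuit' C := by
    intro n
    induction n using Nat.strong_induction_on with
    | _ n ih =>
      intro D hn hD
      by_cases h : ∀ D', M.Dep D' → D' ⊆ D → D' = D
      · exact ⟨D, subset_rfl, hD, h⟩
      · push_neg at h
        obtain ⟨D', hD', hsub, hne⟩ := h
        have hlt : D'.ncard < n := hn ▸ Set.ncard_lt_ncard (hsub.ssubset_of_ne hne) (Set.toFinite D)
        obtain ⟨C, hCD', hC⟩ := ih _ hlt D' rfl hD'
        exact ⟨C, hCD'.trans hsub, hC⟩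
  exact main _ D rfl hD

/-- Removing an element from a circuit yields an independent set. -/
lemma circuit_diff_indep' {α : Type*} (M : Matroid α) {C : Set α} {e : α}
    (hC : M.IsCircuit' C) (he : e ∈ C) : M.Indep (C \ {e}) := by
  by_contra h
  have hsub : C \ {e} ⊆ M.E := (Set.diff_subset).trans hC.1.subset_ground
  have hdep : M.Dep (C \ {e}) := ⟨h, hsub⟩
  have heq := hC.2 _ hdep Set.diff_subset
  have : e ∈ C \ {e} := heq.symm ▸ he
  exact this.2 rfl

/-- The min of a circuit lies in the closure of the rest. -/
lemma circuit_min_mem_closure' {α : Type*} [LinearOrder α] (M : Matroid α) {C : Set α} {e : α}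
    (hC : M.IsCircuit' C) (he : IsMinOf C e) : e ∈ M.closure (C \ {e}) := by
  have hI : M.Indep (C \ {e}) := circuit_diff_indep' M hC he.1
  have hins : insert e (C \ {e}) = C := Set.insert_diff_singleton.trans (by
    rw [Set.insert_eq_self]; exact he.1)
  have hdep : M.Dep (insert e (C \ {e})) := by rw [hins]; exact hC.1
  rw [hI.insert_dep_iff] at hdep
  exact hdep.1

lemma circuit_diff_min_subset_Ioi {α : Type*} [LinearOrder α] {C : Set α} {e : α}
    (he : IsMinOf C e) : C \ {e} ⊆ Set.Ioi e := by
  rintro x ⟨hxC, hxe⟩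
  exact (he.2 x hxC).lt_of_ne fun h => hxe (Set.mem_singleton_iff.mpr h.symm)
  
end Aux
/-- `|Q_M(A)| = |A| − r_M(A)`; in particular it does not depend on the linear order. -/
theorem stmt13 {α : Type*} [Fintype α] [LinearOrder α] (M : Matroid α)
    (hME : M.E = Set.univ) (A : Set α) :
    (QActSet M A).ncard = A.ncard - M.rk' A := by
  classical
  have hground : ∀ X : Set α, X ⊆ M.E := fun X => hME ▸ Set.subset_univ X
  -- characterization of Q
  have hQ : ∀ e, e ∈ QActSet M A ↔ e ∈ A ∧ e ∈ M.closure (A ∩ Set.Ioi e) := by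
    intro e
    constructor
    · rintro ⟨heA, C, hC, hCA, hmin⟩
      refine ⟨heA, ?_⟩
      have h1 := circuit_min_mem_closure' M hC hmin
      have h2 : C \ {e} ⊆ A ∩ Set.Ioi e :=
        fun x hx => ⟨hCA hx.1, circuit_diff_min_subset_Ioi hmin hx⟩
      exact M.closure_subset_closure h2 h1
    · rintro ⟨heA, hecl⟩
      obtain ⟨I, hI⟩ := M.exists_isBasis (A ∩ Set.Ioi e) (hground _)
      have heI : e ∈ M.closure I := hI.closure_eq_closure ▸ hecl
      have heNI : e ∉ I := fun h => lt_irrefl e (hI.subset h).2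
      have hdep : M.Dep (insert e I) := hI.indep.insert_dep_iff.2 ⟨heI, heNI⟩
      obtain ⟨C, hCsub, hC⟩ := exists_circuit_subset' M hdep
      have heC : e ∈ C := by
        by_contra heC
        have : C ⊆ I := fun x hx => ((hCsub hx).resolve_left (fun h => heC (h ▸ hx)))
        exact hC.1.not_indep (hI.indep.subset this)
      refine ⟨heA, C, hC, ?_, heC, ?_⟩
      · intro x hx
        rcases hCsub hx with h | h
        · exact h ▸ heA
        · exact (hI.subset h).1
      · intro x hx
        rcases hCsub hx with h | h
        · exact le_of_eq h.symm
        · exact le_of_lt (hI.subset h).2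
  -- the greedy basis B
  set B : Set α := {e | e ∈ A ∧ e ∉ M.closure (A ∩ Set.Ioi e)} with hBdef
  have hBA : B ⊆ A := fun e he => he.1
  -- B is independent
  have hBindep : M.Indep B := by
    by_contra h
    obtain ⟨C, hCB, hC⟩ := exists_circuit_subset' M ⟨h, hground _⟩
    obtain ⟨e, heC, hmin⟩ := Set.exists_min_image C id (Set.toFinite C) hC.1.nonempty
    have hmin' : IsMinOf C e := ⟨heC, hmin⟩
    have h1 := circuit_min_mem_closure' M hC hmin'
    have h2 : C \ {e} ⊆ A ∩ Set.Ioi e :=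
      fun x hx => ⟨hBA (hCB hx.1), circuit_diff_min_subset_Ioi hmin' hx⟩
    exact (hCB heC).2 (M.closure_subset_closure h2 h1)
  -- B spans A
  have hspan : ∀ e ∈ A, e ∈ M.closure B := by
    have wf : WellFounded ((· > ·) : α → α → Prop) := wellFounded_gt
    intro e
    induction e using wf.induction with
    | _ e ih =>
      intro heA
      by_cases heB : e ∈ B
      · exact M.subset_closure B (hground _) heB
      · have hecl : e ∈ M.closure (A ∩ Set.Ioi e) := by
          by_contra h; exact heB ⟨heA, h⟩
        have hsub : A ∩ Set.Ioi e ⊆ M.closure B := fun x hx => ih x hx.2 hx.1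
        exact M.closure_subset_closure_of_subset_closure hsub hecl
  have hBbasis : M.IsBasis B A := hBindep.isBasis_of_subset_of_subset_closure hBA hspan
  -- rk' A = B.ncard
  have hrk : M.rk' A = B.ncard := by
    apply IsGreatest.csSup_eq
    constructor
    · exact ⟨B, hBA, hBindep, rfl⟩
    · rintro n ⟨I, hIA, hIindep, rfl⟩
      obtain ⟨J, hJ, hIJ⟩ := hIindep.subset_isBasis_of_subset hIA (hground _)
      have hcard : J.ncard = B.ncard := hJ.restrict_isBase.ncard_eq_ncard_of_isBase hBbasis.restrict_isBase
      exact hcard ▸ Set.ncard_le_ncard hIJ (Set.toFinite J)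
  -- Q = A \ B
  have hQeq : QActSet M A = A \ B := by
    ext e
    rw [hQ e]
    constructor
    · rintro ⟨heA, hcl⟩
      exact ⟨heA, fun h => h.2 hcl⟩
    · rintro ⟨heA, heB⟩
      refine ⟨heA, ?_⟩
      by_contra h; exact heB ⟨heA, h⟩
  rw [hQeq, Set.ncard_diff hBA (Set.toFinite B), hrk]
end
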